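/- arXiv:math/0411107 — 5 statements merged into one kernel-verified Lean document; each statement's English description precedes it below -/
import Mathlib

section
/- Let n ≥ 1, let a_1, …, a_{n+1} ∈ ℝ^n be affinely independent, and let c_1, …, c_{n+1} be nonzero real numbers. Define f : ℝ^n_+ → ℝ by f(x) = Σ_{j=1}^{n+1} c_j x^{a_j}, where x^{a_j} := x_1^{a_{1,j}} ⋯ x_n^{a_{n,j}} (real powers). Then f has a zero in ℝ^n_+ if and only if the coefficients c_1, …, c_{n+1} do not all have the same sign. -/
open Finset

/-- An n-variate (n+1)-nomial with real exponents and affinely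
independent support has a root in the open positive orthant iff its
coefficients do not all have the same sign. -/
theorem feas_pos_orthant_simplex_case
    (n : ℕ) (hn : 1 ≤ n)
    (a : Fin (n + 1) → Fin n → ℝ)
    (ha : ∀ γ : Fin (n + 1) → ℝ,
      ∑ j, γ j • a j = 0 → ∑ j, γ j = 0 → γ = 0)
    (c : Fin (n + 1) → ℝ) (hc : ∀ j, c j ≠ 0) :
    (∃ x : Fin n → ℝ, (∀ i, 0 < x i) ∧
        ∑ j, c j * ∏ i, (x i) ^ (a j i) = 0)
      ↔ ¬ ((∀ j, 0 < c j) ∨ (∀ j, c j < 0)) := by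
  constructor
  · rintro ⟨x, hx, hsum⟩ h
    have hterm : ∀ j : Fin (n + 1), 0 < ∏ i, (x i) ^ (a j i) := by
      intro j
      exact Finset.prod_pos fun i _ => Real.rpow_pos_of_pos (hx i) _
    rcases h with h | h
    · have : 0 < ∑ j, c j * ∏ i, (x i) ^ (a j i) :=
        Finset.sum_pos (fun j _ => mul_pos (h j) (hterm j)) ⟨0, Finset.mem_univ 0⟩
      linarith
    · have : ∑ j, c j * ∏ i, (x i) ^ (a j i) < 0 :=
        Finset.sum_neg (fun j _ => mul_neg_of_neg_of_pos (h j) (hterm j)) ⟨0, Finset.mem_univ 0⟩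
      linarith
  · intro h
    push_neg at h
    obtain ⟨⟨p, hp⟩, ⟨q, hq⟩⟩ := h
    have hp' : c p < 0 := lt_of_le_of_ne hp (hc p)
    have hq' : 0 < c q := lt_of_le_of_ne hq (Ne.symm (hc q))
    set L := c (Fin.last n) with hL
    -- find k ≠ last with c k * c last < 0
    obtain ⟨k, hklast, hkc⟩ : ∃ k : Fin (n + 1), k ≠ Fin.last n ∧ c k * L < 0 := by
      rcases lt_or_gt_of_ne (hc (Fin.last n)) with hL0 | hL0
      · refine ⟨q, ?_, mul_neg_of_pos_of_neg hq' hL0⟩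
        rintro rfl; exact absurd hq' (not_lt.2 (le_of_lt hL0))
      · refine ⟨p, ?_, mul_neg_of_neg_of_pos hp' hL0⟩
        rintro rfl; exact absurd hp' (not_lt.2 (le_of_lt hL0))
    set j₀ : Fin n := k.castPred hklast with hj₀
    have hj₀k : j₀.castSucc = k := Fin.castSucc_castPred k hklast
    set S : ℝ := ∑ j ∈ Finset.univ.erase j₀, c j.castSucc with hS
    set ε : ℝ := |L| / (2 * (|S| + 1)) with hε
    have hLne : L ≠ 0 := hc _
    have hεpos : 0 < ε := by
      apply div_pos (abs_pos.2 hLne)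
      positivity
    have hεS : |ε * S| ≤ |L| / 2 := by
      rw [abs_mul]
      have h1 : |ε| = ε := abs_of_pos hεpos
      rw [h1]
      have h2 : ε * |S| ≤ ε * (|S| + 1) := by nlinarith
      have h3 : ε * (|S| + 1) = |L| / 2 := by
        rw [hε]; field_simp
      linarith
    have key : c k * (L + ε * S) < 0 := by
      have h1 : c k * (ε * S) ≤ |c k * (ε * S)| := le_abs_self _
      have h2 : |c k * (ε * S)| = |c k| * |ε * S| := abs_mul _ _
      have h3 : |c k| * |ε * S| ≤ |c k| * (|L| / 2) :=
        mul_le_mul_of_nonneg_left hεS (abs_nonneg _)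
      have h4 : |c k| * |L| = |c k * L| := (abs_mul _ _).symm
      have h5 : |c k * L| = -(c k * L) := abs_of_neg hkc
      nlinarith
    have hck2 : (0:ℝ) < c k ^ 2 :=
      lt_of_le_of_ne (sq_nonneg _) (Ne.symm (pow_ne_zero 2 (hc k)))
    set s : ℝ := -(c k * (L + ε * S)) / (c k ^ 2) with hs
    have hspos : 0 < s := div_pos (by linarith) hck2
    have hcks : c k * s = -(L + ε * S) := by
      rw [hs]
      field_simp [hc k]
    set u : Fin n → ℝ := fun j => if j = j₀ then s else ε with hu
    have hupos : ∀ j, 0 < u j := by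
      intro j; rw [hu]; dsimp only
      split <;> [exact hspos; exact hεpos]
    have husum : ∑ j : Fin n, c j.castSucc * u j + L = 0 := by
      have heq : c j₀.castSucc * u j₀ + ∑ j ∈ Finset.univ.erase j₀, c j.castSucc * u j
          = ∑ j : Fin n, c j.castSucc * u j :=
        Finset.add_sum_erase Finset.univ (fun j => c j.castSucc * u j) (Finset.mem_univ j₀)
      rw [← heq]
      have h1 : u j₀ = s := by rw [hu]; simp
      have h2 : ∑ j ∈ Finset.univ.erase j₀, c j.castSucc * u j = ε * S := by
        rw [hS, Finset.mul_sum]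
        apply Finset.sum_congr rfl
        intro j hj
        have : j ≠ j₀ := Finset.ne_of_mem_erase hj
        rw [hu]; simp [this]; ring
      rw [h1, h2, hj₀k, hcks]
      ring
    -- linear algebra: find y with ∀ j, ∑ i, (a j.castSucc i - a last i) * y i = log (u j)
    set b : Fin n → Fin n → ℝ := fun j i => a j.castSucc i - a (Fin.last n) i with hb
    have hbli : LinearIndependent ℝ b := by
      rw [Fintype.linearIndependent_iff]
      intro g hg j
      set γ : Fin (n + 1) → ℝ := fun j =>
        if h : j = Fin.last n then -(∑ i, g i) else g (j.castPred h) with hγ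
      have hγcs : ∀ j : Fin n, γ j.castSucc = g j := by
        intro j
        have hne : j.castSucc ≠ Fin.last n := (Fin.castSucc_lt_last j).ne
        simp only [hγ, dif_neg hne, Fin.castPred_castSucc]
      have hγ1 : ∑ j, γ j • a j = 0 := by
        rw [Fin.sum_univ_castSucc]
        have hγl : γ (Fin.last n) = -(∑ i, g i) := by rw [hγ]; simp
        rw [hγl]
        have : ∑ j : Fin n, γ j.castSucc • a j.castSucc
            = ∑ j : Fin n, (g j • b j + g j • a (Fin.last n)) := by
          apply Finset.sum_congr rfl
          intro j _
          rw [hγcs]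
          funext i
          simp only [hb, Pi.add_apply, Pi.smul_apply, smul_eq_mul]
          ring
        rw [this, Finset.sum_add_distrib, hg, zero_add, ← Finset.sum_smul]
        simp
      have hγ2 : ∑ j, γ j = 0 := by
        rw [Fin.sum_univ_castSucc]
        have hγl : γ (Fin.last n) = -(∑ i, g i) := by rw [hγ]; simp
        rw [hγl]
        have : ∑ j : Fin n, γ j.castSucc = ∑ j : Fin n, g j :=
          Finset.sum_congr rfl fun j _ => hγcs j
        rw [this]; ring
      have := ha γ hγ1 hγ2
      calc g j = γ j.castSucc := (hγcs j).symm
        _ = 0 := by rw [this]; rfl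
    set M : Matrix (Fin n) (Fin n) ℝ := Matrix.of b with hM
    have hMunit : IsUnit M := Matrix.linearIndependent_rows_iff_isUnit.mp hbli
    have hMsurj : Function.Surjective M.mulVec :=
      Matrix.mulVec_surjective_iff_isUnit.mpr hMunit
    obtain ⟨y, hy⟩ := hMsurj (fun j => Real.log (u j))
    have hy' : ∀ j : Fin n, ∑ i, b j i * y i = Real.log (u j) := by
      intro j
      have := congrFun hy j
      simpa [Matrix.mulVec, dotProduct, hM] using this
    refine ⟨fun i => Real.exp (y i), fun i => Real.exp_pos _, ?_⟩
    have hpow : ∀ (j : Fin (n+1)), ∏ i, (Real.exp (y i)) ^ (a j i)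
        = Real.exp (∑ i, a j i * y i) := by
      intro j
      rw [Real.exp_sum]
      apply Finset.prod_congr rfl
      intro i _
      rw [Real.rpow_def_of_pos (Real.exp_pos _), Real.log_exp]
      ring_nf
    have hterm : ∀ j : Fin n,
        c j.castSucc * ∏ i, (Real.exp (y i)) ^ (a j.castSucc i)
        = c j.castSucc * u j * Real.exp (∑ i, a (Fin.last n) i * y i) := by
      intro j
      rw [hpow]
      have : ∑ i, a j.castSucc i * y i
          = (∑ i, b j i * y i) + ∑ i, a (Fin.last n) i * y i := by
        rw [← Finset.sum_add_distrib]
        apply Finset.sum_congr rfl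
        intro i _
        rw [hb]
        ring
      rw [this, hy' j, Real.exp_add, Real.exp_log (hupos j)]
      ring
    rw [Fin.sum_univ_castSucc]
    rw [Finset.sum_congr rfl (fun j _ => hterm j), hpow, ← Finset.sum_mul]
    have : (∑ j : Fin n, c j.castSucc * u j) = -L := by linarith
    rw [this, ← hL]
    ring
end

section
/- Let n ≥ 1, let a_1, …, a_{n+1} ∈ ℤ^n be affinely independent with a_j = (a_{1,j},…,a_{n,j}), and let c_1, …, c_{n+1} be nonzero real numbers all of the same sign. Define f : (ℝ∖{0})^n → ℝ by f(x) = Σ_{j=1}^{n+1} c_j x^{a_j}, where x^{a_j} := x_1^{a_{1,j}} ⋯ x_n^{a_{n,j}}. Then f has a zero in (ℝ∖{0})^n if and only if there exist indices i ∈ {1,…,n} and j, j' ∈ {1,…,n+1} such that a_{i,j} − a_{i,j'} is odd, and this holds if and only if there exist indices i ∈ {1,…,n} and j ∈ {1,…,n+1} such that a_{i,j} − a_{i,1} is odd. -/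
open Finset

lemma aux_exp_zpow (t : ℝ) (m : ℤ) : Real.exp t ^ m = Real.exp (m * t) := by
  rw [← Real.rpow_intCast, Real.rpow_def_of_pos (Real.exp_pos t), Real.log_exp, mul_comm]

lemma aux_prod_sign (n : ℕ) (i0 : Fin n) (u : Fin n → ℝ) (m : Fin n → ℤ) :
    ∏ i, ((if i = i0 then (-1:ℝ) else 1) * Real.exp (u i)) ^ (m i)
      = (-1:ℝ) ^ (m i0) * Real.exp (∑ i, (m i : ℝ) * u i) := by
  simp_rw [mul_zpow, aux_exp_zpow]
  rw [Finset.prod_mul_distrib, Real.exp_sum]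
  congr 1
  rw [Finset.prod_eq_single i0]
  · simp
  · intro b _ hb; simp [hb]
  · simp

lemma aux_construct (n : ℕ) (hn : 1 ≤ n) (a : Fin (n+1) → Fin n → ℤ)
    (hlin : LinearIndependent ℝ (fun j : Fin n => (fun i => (a j.succ i : ℝ) - a 0 i)))
    (c : Fin (n+1) → ℝ) (hc : ∀ j, 0 < c j)
    (i0 : Fin n) (j1 : Fin n) (hodd : Odd (a j1.succ i0 - a 0 i0)) :
    ∃ x : Fin n → ℝ, (∀ i, x i ≠ 0) ∧ ∑ j, c j * ∏ i, (x i) ^ (a j i) = 0 := by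
  have hN : (0:ℝ) < n := by exact_mod_cast hn
  set σ : Fin n → ℝ := fun k => (-1:ℝ) ^ (a k.succ i0 - a 0 i0) with hσdef
  have hσ : ∀ k, σ k = 1 ∨ σ k = -1 := by
    intro k
    rcases Int.even_or_odd (a k.succ i0 - a 0 i0) with h | h
    · left; exact h.neg_one_zpow
    · right; exact h.neg_one_zpow
  have hσ1 : σ j1 = -1 := hodd.neg_one_zpow
  set δ : Fin n → ℝ := fun k => c 0 / (2 * n * c k.succ) with hδdef
  have hδpos : ∀ k, 0 < δ k := by
    intro k
    exact div_pos (hc 0) (mul_pos (by linarith) (hc k.succ))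
  set T : ℝ := c 0 + ∑ k ∈ univ.erase j1, c k.succ * σ k * δ k with hTdef
  have hc2 : 0 < c 0 / (2 * n) := div_pos (hc 0) (by linarith)
  have hterm : ∀ k, c k.succ * σ k * δ k = σ k * (c 0 / (2 * n)) := by
    intro k
    have h := (hc k.succ).ne'
    field_simp [hδdef]
    simp only [hδdef]; field_simp
  have hTpos : 0 < T := by
    have key : (univ.erase j1).card • (-(c 0 / (2*n))) ≤ ∑ k ∈ univ.erase j1, c k.succ * σ k * δ k := by
      apply Finset.card_nsmul_le_sum
      intro k _
      rw [hterm k]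
      rcases hσ k with h | h <;> rw [h] <;> linarith
    have hcard : ((univ.erase j1).card : ℝ) ≤ n := by
      have : (univ.erase j1).card ≤ n := by
        simpa using Finset.card_erase_le.trans (by simp)
      exact_mod_cast this
    rw [nsmul_eq_mul] at key
    have hid : (n:ℝ) * (c 0 / (2*n)) = c 0 / 2 := by field_simp
    have : -((n:ℝ) * (c 0 / (2*n))) ≤ ((univ.erase j1).card : ℝ) * (-(c 0 / (2*n))) := by
      nlinarith
    rw [hTdef]
    nlinarith
  set y : Fin n → ℝ := fun k => if k = j1 then T / c j1.succ else δ k with hydef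
  have hypos : ∀ k, 0 < y k := by
    intro k
    by_cases h : k = j1
    · simp only [hydef, h, if_pos]
      exact div_pos hTpos (hc j1.succ)
    · simp only [hydef, if_neg h]
      exact hδpos k
  have hbal : c 0 + ∑ k, c k.succ * σ k * y k = 0 := by
    rw [← Finset.add_sum_erase _ _ (Finset.mem_univ j1)]
    have h1 : c j1.succ * σ j1 * y j1 = -T := by
      simp only [hydef, if_pos rfl, hσ1]
      rw [mul_neg_one, neg_mul, ← mul_div_assoc, mul_div_cancel_left₀ _ (hc j1.succ).ne']
    have h2 : ∑ k ∈ univ.erase j1, c k.succ * σ k * y k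
        = ∑ k ∈ univ.erase j1, c k.succ * σ k * δ k := by
      apply Finset.sum_congr rfl
      intro k hk
      have : k ≠ j1 := Finset.ne_of_mem_erase hk
      simp [hydef, this]
    rw [h1, h2, hTdef]
    ring
  -- solve the linear system
  set M : Matrix (Fin n) (Fin n) ℝ := Matrix.of (fun j i => (a j.succ i : ℝ) - a 0 i) with hMdef
  have hM : IsUnit M := Matrix.linearIndependent_rows_iff_isUnit.mp hlin
  set w : Fin n → ℝ := fun k => Real.log (y k) with hwdef
  set u : Fin n → ℝ := M⁻¹.mulVec w with hudef
  have hMu : M.mulVec u = w := by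
    rw [hudef, Matrix.mulVec_mulVec, Matrix.mul_nonsing_inv M ((Matrix.isUnit_iff_isUnit_det M).mp hM),
      Matrix.one_mulVec]
  have hu : ∀ k, ∑ i, ((a k.succ i : ℝ) - a 0 i) * u i = Real.log (y k) := by
    intro k
    have h := congrFun hMu k
    simpa [Matrix.mulVec, dotProduct, hMdef, hwdef] using h
  refine ⟨fun i => (if i = i0 then (-1:ℝ) else 1) * Real.exp (u i), ?_, ?_⟩
  · intro i
    by_cases h : i = i0 <;> simp [h, Real.exp_ne_zero]
  · have hprod : ∀ j : Fin (n+1),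
        ∏ i, ((if i = i0 then (-1:ℝ) else 1) * Real.exp (u i)) ^ (a j i)
          = (-1:ℝ) ^ (a j i0) * Real.exp (∑ i, (a j i : ℝ) * u i) :=
      fun j => aux_prod_sign n i0 u (a j)
    have hterm2 : ∀ j : Fin (n+1),
        c j * ((-1:ℝ) ^ (a j i0) * Real.exp (∑ i, (a j i : ℝ) * u i))
          = ((-1:ℝ) ^ (a 0 i0) * Real.exp (∑ i, (a 0 i : ℝ) * u i))
            * (c j * ((-1:ℝ) ^ (a j i0 - a 0 i0) * Real.exp (∑ i, ((a j i : ℝ) - a 0 i) * u i))) := by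
      intro j
      have e1 : (-1:ℝ) ^ (a j i0) = (-1:ℝ) ^ (a 0 i0) * (-1:ℝ) ^ (a j i0 - a 0 i0) := by
        rw [← zpow_add₀ (by norm_num : (-1:ℝ) ≠ 0)]
        congr 1
        ring
      have e2 : Real.exp (∑ i, (a j i : ℝ) * u i)
          = Real.exp (∑ i, (a 0 i : ℝ) * u i) * Real.exp (∑ i, ((a j i : ℝ) - a 0 i) * u i) := by
        rw [← Real.exp_add]
        congr 1
        rw [← Finset.sum_add_distrib]
        apply Finset.sum_congr rfl
        intro i _
        ring
      rw [e1, e2]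
      ring
    calc ∑ j, c j * ∏ i, ((if i = i0 then (-1:ℝ) else 1) * Real.exp (u i)) ^ (a j i)
        = ∑ j, ((-1:ℝ) ^ (a 0 i0) * Real.exp (∑ i, (a 0 i : ℝ) * u i))
            * (c j * ((-1:ℝ) ^ (a j i0 - a 0 i0) * Real.exp (∑ i, ((a j i : ℝ) - a 0 i) * u i))) := by
          apply Finset.sum_congr rfl
          intro j _
          rw [hprod j, hterm2 j]
      _ = ((-1:ℝ) ^ (a 0 i0) * Real.exp (∑ i, (a 0 i : ℝ) * u i))
            * ∑ j, c j * ((-1:ℝ) ^ (a j i0 - a 0 i0) * Real.exp (∑ i, ((a j i : ℝ) - a 0 i) * u i)) := by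
          rw [Finset.mul_sum]
      _ = 0 := by
          have hz : ∑ j, c j * ((-1:ℝ) ^ (a j i0 - a 0 i0) * Real.exp (∑ i, ((a j i : ℝ) - a 0 i) * u i)) = 0 := by
            rw [Fin.sum_univ_succ]
            have h0 : c 0 * ((-1:ℝ) ^ (a 0 i0 - a 0 i0) * Real.exp (∑ i, ((a 0 i : ℝ) - a 0 i) * u i)) = c 0 := by
              simp
            have hs : ∀ k : Fin n,
                c k.succ * ((-1:ℝ) ^ (a k.succ i0 - a 0 i0) * Real.exp (∑ i, ((a k.succ i : ℝ) - a 0 i) * u i))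
                  = c k.succ * σ k * y k := by
              intro k
              rw [hu k, Real.exp_log (hypos k), hσdef]
              ring
            rw [h0]
            rw [Finset.sum_congr rfl (fun k _ => hs k)]
            exact hbal
          rw [hz, mul_zero]


lemma aux_even_prod_pos {n : ℕ} (x : Fin n → ℝ) (hx : ∀ i, x i ≠ 0) (m : Fin n → ℤ)
    (hm : ∀ i, Even (m i)) : 0 < ∏ i, x i ^ (m i) := by
  apply Finset.prod_pos
  intro i _
  exact (hm i).zpow_pos (hx i)

lemma aux_part2 (n : ℕ) (a : Fin (n+1) → Fin n → ℤ) :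
    (∃ (i : Fin n) (j j' : Fin (n + 1)), Odd (a j i - a j' i))
      ↔ ∃ (i : Fin n) (j : Fin (n + 1)), Odd (a j i - a 0 i) := by
  constructor
  · rintro ⟨i, j, j', h⟩
    by_cases h0 : Odd (a j i - a 0 i)
    · exact ⟨i, j, h0⟩
    · refine ⟨i, j', ?_⟩
      have hev : Even (a j i - a 0 i) := Int.not_odd_iff_even.mp h0
      have : a j' i - a 0 i = (a j i - a 0 i) - (a j i - a j' i) := by ring
      rw [this]
      exact hev.sub_odd h
  · rintro ⟨i, j, h⟩
    exact ⟨i, j, 0, h⟩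

lemma aux_forward (n : ℕ) (a : Fin (n+1) → Fin n → ℤ) (c : Fin (n+1) → ℝ)
    (hsign : (∀ j, 0 < c j) ∨ (∀ j, c j < 0))
    (heven : ∀ (i : Fin n) (j : Fin (n+1)), ¬ Odd (a j i - a 0 i))
    (x : Fin n → ℝ) (hx : ∀ i, x i ≠ 0) :
    ∑ j, c j * ∏ i, (x i) ^ (a j i) ≠ 0 := by
  have hsplit : ∀ j, ∏ i, x i ^ (a j i)
      = (∏ i, x i ^ (a 0 i)) * ∏ i, x i ^ (a j i - a 0 i) := by
    intro j
    rw [← Finset.prod_mul_distrib]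
    apply Finset.prod_congr rfl
    intro i _
    rw [← zpow_add₀ (hx i)]
    congr 1
    ring
  have hpos : ∀ j, 0 < ∏ i, x i ^ (a j i - a 0 i) :=
    fun j => aux_even_prod_pos x hx _ (fun i => Int.not_odd_iff_even.mp (heven i j))
  have hEq : ∑ j, c j * ∏ i, x i ^ (a j i)
      = (∏ i, x i ^ (a 0 i)) * ∑ j, c j * ∏ i, x i ^ (a j i - a 0 i) := by
    rw [Finset.mul_sum]
    apply Finset.sum_congr rfl
    intro j _
    rw [hsplit j]
    ring
  rw [hEq]
  apply mul_ne_zero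
  · exact Finset.prod_ne_zero_iff.mpr fun i _ => zpow_ne_zero _ (hx i)
  · rcases hsign with h | h
    · exact (Finset.sum_pos (fun j _ => mul_pos (h j) (hpos j)) ⟨0, Finset.mem_univ 0⟩).ne'
    · exact (Finset.sum_neg (fun j _ => mul_neg_of_neg_of_pos (h j) (hpos j)) ⟨0, Finset.mem_univ 0⟩).ne

lemma aux_lin (n : ℕ) (a : Fin (n+1) → Fin n → ℤ)
    (ha : ∀ γ : Fin (n + 1) → ℝ,
      ∑ j, γ j • (fun i => (a j i : ℝ)) = 0 → ∑ j, γ j = 0 → γ = 0) :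
    LinearIndependent ℝ (fun j : Fin n => (fun i => (a j.succ i : ℝ) - a 0 i)) := by
  rw [Fintype.linearIndependent_iff]
  intro g hg k
  set γ : Fin (n+1) → ℝ := fun j => Fin.cases (-∑ l, g l) g j with hγ
  have h1 : ∑ j, γ j • (fun i => (a j i : ℝ)) = 0 := by
    funext i
    have hgi := congrFun hg i
    simp only [Finset.sum_apply, Pi.smul_apply, smul_eq_mul, Pi.zero_apply] at hgi ⊢
    rw [Fin.sum_univ_succ]
    simp only [hγ, Fin.cases_zero, Fin.cases_succ]
    simp_rw [mul_sub] at hgi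
    rw [Finset.sum_sub_distrib, ← Finset.sum_mul] at hgi
    linarith
  have h2 : ∑ j, γ j = 0 := by
    rw [Fin.sum_univ_succ]
    simp [hγ]
  have h3 := ha γ h1 h2
  have := congrFun h3 k.succ
  simpa [hγ] using this


/-- For an n-variate (n+1)-nomial with integer exponents, affinely
independent support, and coefficients all of the same sign, existence of a root
in (ℝ∖{0})^n is equivalent to some coordinatewise difference of exponent
vectors being odd, which in turn is equivalent to some coordinate difference
with the first exponent vector being odd. -/
theorem feas_nonzero_orthants_simplex_case
    (n : ℕ) (hn : 1 ≤ n)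
    (a : Fin (n + 1) → Fin n → ℤ)
    (ha : ∀ γ : Fin (n + 1) → ℝ,
      ∑ j, γ j • (fun i => (a j i : ℝ)) = 0 → ∑ j, γ j = 0 → γ = 0)
    (c : Fin (n + 1) → ℝ) (hc : ∀ j, c j ≠ 0)
    (hsign : (∀ j, 0 < c j) ∨ (∀ j, c j < 0)) :
    ((∃ x : Fin n → ℝ, (∀ i, x i ≠ 0) ∧
        ∑ j, c j * ∏ i, (x i) ^ (a j i) = 0)
      ↔ ∃ (i : Fin n) (j j' : Fin (n + 1)), Odd (a j i - a j' i)) ∧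
    ((∃ (i : Fin n) (j j' : Fin (n + 1)), Odd (a j i - a j' i))
      ↔ ∃ (i : Fin n) (j : Fin (n + 1)), Odd (a j i - a 0 i)) := by
  refine ⟨⟨?_, ?_⟩, aux_part2 n a⟩
  · rintro ⟨x, hx, hsum⟩
    by_contra hcon
    exact aux_forward n a c hsign (fun i j ho => hcon ⟨i, j, 0, ho⟩) x hx hsum
  · intro h
    obtain ⟨i0, j0, hodd⟩ := (aux_part2 n a).mp h
    have hj0 : j0 ≠ 0 := by
      rintro rfl
      simp only [sub_self] at hodd
      exact (Int.not_odd_iff_even.mpr Even.zero) hodd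
    obtain ⟨j1, rfl⟩ := Fin.eq_succ_of_ne_zero hj0
    have hlin := aux_lin n a ha
    rcases hsign with hp | hneg
    · exact aux_construct n hn a hlin c hp i0 j1 hodd
    · obtain ⟨x, hx, hs⟩ :=
        aux_construct n hn a hlin (fun j => -c j) (fun j => neg_pos.mpr (hneg j)) i0 j1 hodd
      refine ⟨x, hx, ?_⟩
      simp only [neg_mul, Finset.sum_neg_distrib, neg_eq_zero] at hs
      exact hs
end

section
/- For every n ≥ 2 there exists ε_0 > 0 such that for all ε with 0 < ε < ε_0, the zero set in ℝ^n_+ of the polynomial f_ε(x) := ε(1 + x_1^{2n} + ⋯ + x_n^{2n}) − x_1 x_2 ⋯ x_n has exactly one connected component, and this component is a compact subset of ℝ^n contained in ℝ^n_+. -/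
open Finset

section Aux

open Set Metric

private lemma isConnected_frontier_of_convex {E : Type*} [NormedAddCommGroup E]
    [NormedSpace ℝ E] (hrank : 1 < Module.rank ℝ E) {K : Set E}
    (hK : Convex ℝ K) (h0 : K ∈ nhds 0) (hb : Bornology.IsVonNBounded ℝ K) :
    IsConnected (frontier K) := by
  have habs : Absorbent ℝ K := absorbent_nhds_zero h0
  have hgc : Continuous (gauge K) := continuous_gauge hK h0
  have key : frontier K = (fun θ => (gauge K θ)⁻¹ • θ) '' Metric.sphere (0:E) 1 := by
    apply Set.Subset.antisymm
    · intro z hz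
      have hg : gauge K z = 1 := (gauge_eq_one_iff_mem_frontier hK h0).2 hz
      have hz0 : z ≠ 0 := by rintro rfl; simp [gauge_zero] at hg
      have hnz : ‖z‖ ≠ 0 := norm_ne_zero_iff.2 hz0
      refine ⟨‖z‖⁻¹ • z, ?_, ?_⟩
      · simp [mem_sphere_iff_norm, norm_smul, abs_of_nonneg, inv_mul_cancel₀ hnz]
      · show (gauge K (‖z‖⁻¹ • z))⁻¹ • (‖z‖⁻¹ • z) = z
        rw [gauge_smul_of_nonneg (by positivity), smul_eq_mul, hg, mul_one, inv_inv,
          smul_smul, mul_inv_cancel₀ hnz, one_smul]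
    · rintro z ⟨θ, hθ, rfl⟩
      have hθ0 : θ ≠ 0 := by
        intro h; rw [mem_sphere_iff_norm, h] at hθ; simp at hθ
      have hpos : 0 < gauge K θ := (gauge_pos habs hb).2 hθ0
      rw [← gauge_eq_one_iff_mem_frontier hK h0,
        gauge_smul_of_nonneg (inv_nonneg.2 hpos.le), smul_eq_mul, inv_mul_cancel₀ hpos.ne']
  rw [key]
  refine (isConnected_sphere hrank 0 zero_le_one).image _ ?_
  refine ContinuousOn.smul ?_ continuousOn_id
  exact (hgc.continuousOn).inv₀ fun θ hθ => by
    have hθ0 : θ ≠ 0 := by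
      intro h; rw [mem_sphere_iff_norm, h] at hθ; simp at hθ
    exact ((gauge_pos habs hb).2 hθ0).ne'

private noncomputable def Hfun (n : ℕ) (ε : ℝ) (y : Fin n → ℝ) : ℝ :=
  ε * Real.exp (-(∑ j, y j)) + ∑ i, ε * Real.exp (((2*n : ℕ) : ℝ) * y i - ∑ j, y j)

private lemma Hfun_continuous (n : ℕ) (ε : ℝ) : Continuous (Hfun n ε) := by
  unfold Hfun; fun_prop

private noncomputable def lc {n : ℕ} (c : Fin n → ℝ) : (Fin n → ℝ) →ₗ[ℝ] ℝ :=
  ∑ j, c j • LinearMap.proj j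

private lemma lc_apply {n : ℕ} (c : Fin n → ℝ) (y : Fin n → ℝ) :
    lc c y = ∑ j, c j * y j := by
  simp [lc, LinearMap.sum_apply]

private lemma convexOn_term {n : ℕ} {ε : ℝ} (hε : 0 ≤ ε) (c : Fin n → ℝ) :
    ConvexOn ℝ Set.univ (fun y : Fin n → ℝ => ε * Real.exp (∑ j, c j * y j)) := by
  have h := (convexOn_exp.comp_affineMap (lc c).toAffineMap)
  rw [Set.preimage_univ] at h
  have h2 := h.smul hε
  convert h2 using 2 with y
  iterate 4 rfl
  simp [lc_apply, Function.comp]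

private lemma convexOn_finset_sum {E : Type*} [AddCommGroup E] [Module ℝ E]
    {ι : Type*} (t : Finset ι) (f : ι → E → ℝ)
    (h : ∀ i ∈ t, ConvexOn ℝ Set.univ (f i)) :
    ConvexOn ℝ Set.univ (fun y => ∑ i ∈ t, f i y) := by
  classical
  induction t using Finset.induction_on with
  | empty => simpa using convexOn_const (0:ℝ) convex_univ
  | insert a s hni ih =>
    simp only [Finset.sum_insert hni]
    exact (h a (Finset.mem_insert_self a s)).add
      (ih fun i hi => h i (Finset.mem_insert_of_mem hi))

private lemma Hfun_convexOn (n : ℕ) {ε : ℝ} (hε : 0 ≤ ε) :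
    ConvexOn ℝ Set.univ (Hfun n ε) := by
  unfold Hfun
  refine ConvexOn.add ?_ ?_
  · have := convexOn_term (n := n) hε (fun _ => (-1 : ℝ))
    convert this using 2 with y
    · rfl
    rw [← Finset.sum_neg_distrib]
    congr 1
    congr 1
    apply Finset.sum_congr rfl
    intro j _; ring
  · refine convexOn_finset_sum _ _ fun i _ => ?_
    have := convexOn_term (n := n) hε
      (fun j => (if j = i then ((2*n : ℕ) : ℝ) else 0) - 1)
    convert this using 2 with y
    · rfl
    · rfl
    congr 1
    rw [show (∑ j, ((if j = i then ((2*n : ℕ) : ℝ) else 0) - 1) * y j)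
        = ∑ j, ((if j = i then ((2*n : ℕ) : ℝ) * y j else 0) - y j) by
      apply Finset.sum_congr rfl; intro j _; split <;> ring]
    rw [Finset.sum_sub_distrib, Finset.sum_ite_eq' Finset.univ i
      (fun j => ((2*n : ℕ) : ℝ) * y j)]
    simp

private lemma Hfun_eq (n : ℕ) (ε : ℝ) (y : Fin n → ℝ) :
    Hfun n ε y = ε * (1 + ∑ i, (Real.exp (y i)) ^ (2*n)) * (Real.exp (∑ j, y j))⁻¹ := by
  unfold Hfun
  rw [Real.exp_neg]
  have : ∀ i : Fin n, Real.exp (((2*n : ℕ) : ℝ) * y i - ∑ j, y j)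
      = (Real.exp (y i)) ^ (2*n) * (Real.exp (∑ j, y j))⁻¹ := by
    intro i
    rw [Real.exp_sub, div_eq_mul_inv, Real.exp_nat_mul]
  simp only [this]
  rw [show (∑ x : Fin n, ε * (Real.exp (y x) ^ (2*n) * (Real.exp (∑ j, y j))⁻¹))
      = (∑ x : Fin n, Real.exp (y x) ^ (2*n)) * (ε * (Real.exp (∑ j, y j))⁻¹) by
    rw [Finset.sum_mul]; apply Finset.sum_congr rfl; intro x _; ring]
  ring

private lemma Hfun_bound (n : ℕ) (hn : 1 ≤ n) {ε : ℝ} (hε : 0 < ε) (hε1 : ε < 1)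
    {y : Fin n → ℝ} (hy : Hfun n ε y ≤ 1) :
    ∀ i, |y i| ≤ ((n : ℝ) + 1) * (-Real.log ε) := by
  set L : ℝ := -Real.log ε with hLdef
  have hL : 0 < L := by
    have := Real.log_neg hε hε1
    simp only [hLdef]; linarith
  set S : ℝ := ∑ j, y j with hSdef
  have key : ∀ t : ℝ, ε * Real.exp t ≤ 1 → t ≤ L := by
    intro t ht
    have h1 : Real.exp t ≤ Real.exp L := by
      have hinv : Real.exp L = ε⁻¹ := by
        rw [hLdef, Real.exp_neg, Real.exp_log hε]
      rw [hinv, ← one_div]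
      calc Real.exp t = (ε * Real.exp t) / ε := by field_simp
        _ ≤ 1 / ε := by gcongr
    exact Real.exp_le_exp.1 h1
  have term_nonneg : ∀ i : Fin n,
      0 ≤ ε * Real.exp (((2*n : ℕ) : ℝ) * y i - S) := fun i => by positivity
  have sum_nonneg' : 0 ≤ ∑ i, ε * Real.exp (((2*n : ℕ) : ℝ) * y i - S) :=
    Finset.sum_nonneg fun i _ => term_nonneg i
  have h0 : ε * Real.exp (-S) ≤ 1 := by
    have := hy; unfold Hfun at this; rw [← hSdef] at this; linarith
  have hterm : ∀ i : Fin n, ε * Real.exp (((2*n : ℕ) : ℝ) * y i - S) ≤ 1 := by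
    intro i
    have hle : ε * Real.exp (((2*n : ℕ) : ℝ) * y i - S)
        ≤ ∑ j, ε * Real.exp (((2*n : ℕ) : ℝ) * y j - S) :=
      Finset.single_le_sum (fun j _ => term_nonneg j) (Finset.mem_univ i)
    have h2 : 0 ≤ ε * Real.exp (-S) := by positivity
    have := hy; unfold Hfun at this; rw [← hSdef] at this
    linarith
  have hS1 : -S ≤ L := key _ h0
  have hyiL : ∀ i, ((2*n : ℕ) : ℝ) * y i - S ≤ L := fun i => key _ (hterm i)
  have hcast : ((2*n : ℕ) : ℝ) = 2 * (n : ℝ) := by push_cast; ring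
  have hN : (1 : ℝ) ≤ (n : ℝ) := by exact_mod_cast hn
  have hSsum : 2 * (n : ℝ) * S ≤ (n : ℝ) * (S + L) := by
    have h3 : ∑ i : Fin n, (2 * (n : ℝ) * y i) ≤ ∑ _i : Fin n, (S + L) :=
      Finset.sum_le_sum fun i _ => by have := hyiL i; rw [hcast] at this; linarith
    rw [← Finset.mul_sum, ← hSdef] at h3
    simp only [Finset.sum_const, Finset.card_univ, Fintype.card_fin, nsmul_eq_mul] at h3
    linarith
  have hSL : S ≤ L := by nlinarith
  have hyU : ∀ i, y i ≤ L := by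
    intro i
    have h4 := hyiL i
    rw [hcast] at h4
    nlinarith [hyiL i]
  intro i
  have hlow : -(((n : ℝ) + 1) * L) ≤ y i := by
    have herase : ∑ j ∈ Finset.univ.erase i, y j + y i = S :=
      Finset.sum_erase_add Finset.univ y (Finset.mem_univ i)
    have hcard : ((Finset.univ.erase i).card : ℝ) ≤ (n : ℝ) := by
      have : (Finset.univ.erase i).card ≤ n := by
        simpa using Finset.card_erase_le.trans (by simp)
      exact_mod_cast this
    have hsum_le : ∑ j ∈ Finset.univ.erase i, y j ≤ ((Finset.univ.erase i).card : ℝ) * L := by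
      have := Finset.sum_le_card_nsmul (Finset.univ.erase i) y L
        (fun j _ => hyU j)
      simpa [nsmul_eq_mul] using this
    have : ∑ j ∈ Finset.univ.erase i, y j ≤ (n : ℝ) * L :=
      hsum_le.trans (by nlinarith)
    linarith
  have hup : y i ≤ ((n : ℝ) + 1) * L := (hyU i).trans (by nlinarith)
  exact abs_le.2 ⟨hlow, hup⟩

end Aux

/-- For every n ≥ 2 and all sufficiently small ε > 0, the zero set
of ε(1 + x₁^{2n} + ⋯ + xₙ^{2n}) − x₁⋯xₙ in the open positive orthant has
exactly one connected component, and it is compact. -/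
theorem small_perturbation_one_compact_component
    (n : ℕ) (hn : 2 ≤ n) :
    ∃ ε₀ : ℝ, 0 < ε₀ ∧ ∀ ε : ℝ, 0 < ε → ε < ε₀ →
      ∀ Z : Set (Fin n → ℝ),
        Z = {x | (∀ i, 0 < x i) ∧
              ε * (1 + ∑ i, (x i) ^ (2 * n)) - ∏ i, x i = 0} →
        IsConnected Z ∧ IsCompact Z ∧ Z ⊆ {x | ∀ i, 0 < x i} := by
  refine ⟨((n : ℝ) + 1)⁻¹, by positivity, ?_⟩
  intro ε hε hεlt Z hZ
  have hN2 : (2 : ℝ) ≤ (n : ℝ) := by exact_mod_cast hn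
  have hε1 : ε < 1 := by
    have h3 : ((n : ℝ) + 1)⁻¹ ≤ 1 := by
      rw [inv_le_one_iff₀]; right; linarith
    linarith
  have hεn : ε * ((n : ℝ) + 1) < 1 := by
    have := (lt_inv_comm₀ (by positivity : (0:ℝ) < (n:ℝ)+1) hε).2
    calc ε * ((n : ℝ) + 1) < ((n : ℝ) + 1)⁻¹ * ((n : ℝ) + 1) := by
          apply mul_lt_mul_of_pos_right hεlt; positivity
      _ = 1 := by field_simp
  set K : Set (Fin n → ℝ) := {y | Hfun n ε y ≤ 1} with hKdef
  set Y : Set (Fin n → ℝ) := {y | Hfun n ε y = 1} with hYdef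
  have hHcont : Continuous (Hfun n ε) := Hfun_continuous n ε
  have hKconv : Convex ℝ K := by
    have := (Hfun_convexOn n hε.le).convex_le 1
    simpa [hKdef] using this
  have hH0 : Hfun n ε 0 = ε * ((n : ℝ) + 1) := by
    unfold Hfun
    simp [Finset.sum_const, Finset.card_univ]
    ring
  have hH0lt : Hfun n ε 0 < 1 := by rw [hH0]; exact hεn
  have hopen : IsOpen {y : Fin n → ℝ | Hfun n ε y < 1} :=
    isOpen_lt hHcont continuous_const
  have hK0 : K ∈ nhds (0 : Fin n → ℝ) :=
    Filter.mem_of_superset (hopen.mem_nhds hH0lt) (fun y (hy : Hfun n ε y < 1) => show Hfun n ε y ≤ 1 from hy.le)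
  have hKclosed : IsClosed K := isClosed_le hHcont continuous_const
  have hKbdd : Bornology.IsBounded K := by
    rw [Metric.isBounded_iff_subset_closedBall 0]
    refine ⟨((n : ℝ) + 1) * (-Real.log ε), fun y hy => ?_⟩
    rw [Metric.mem_closedBall, dist_zero_right]
    have hB := Hfun_bound n (by omega) hε hε1 hy
    have hR : 0 ≤ ((n : ℝ) + 1) * (-Real.log ε) :=
      le_trans (abs_nonneg _) (hB ⟨0, by omega⟩)
    rw [pi_norm_le_iff_of_nonneg hR]
    intro i
    rw [Real.norm_eq_abs]
    exact hB i
  have hKcomp : IsCompact K := Metric.isCompact_of_isClosed_isBounded hKclosed hKbdd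
  have hKvnb : Bornology.IsVonNBounded ℝ K :=
    (NormedSpace.isVonNBounded_iff ℝ).2 hKbdd
  -- Y is the frontier of K
  have hYfront : Y = frontier K := by
    apply Set.Subset.antisymm
    · intro y hy
      have hy1 : Hfun n ε y = 1 := hy
      rw [frontier_eq_closure_inter_closure]
      constructor
      · exact subset_closure (le_of_eq hy1)
      · -- y is a limit of points outside K
        have hout : ∀ t : ℝ, 1 < t → 1 < Hfun n ε (t • y) := by
          intro t ht
          have ht0 : (0:ℝ) < t⁻¹ := by positivity
          have htinv : t⁻¹ < 1 := by
            nlinarith [mul_inv_cancel₀ (by linarith : t ≠ 0)]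
          have hconv := (Hfun_convexOn n hε.le).2 (Set.mem_univ (0 : Fin n → ℝ))
            (Set.mem_univ (t • y)) (by linarith : (0:ℝ) ≤ 1 - t⁻¹)
            (by positivity : (0:ℝ) ≤ t⁻¹) (by ring)
          have hpt : (1 - t⁻¹) • (0 : Fin n → ℝ) + t⁻¹ • (t • y) = y := by
            rw [smul_zero, zero_add, smul_smul, inv_mul_cancel₀ (by linarith : t ≠ 0), one_smul]
          rw [hpt, hy1] at hconv
          simp only [smul_eq_mul] at hconv
          by_contra hle
          push_neg at hle
          nlinarith [mul_pos (sub_pos.2 htinv) (sub_pos.2 hH0lt),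
            mul_le_mul_of_nonneg_left hle ht0.le]
        have htendsto : Filter.Tendsto
            (fun k : ℕ => (1 + (1 / ((k : ℝ) + 1))) • y) Filter.atTop (nhds y) := by
          have h1 : Filter.Tendsto (fun k : ℕ => 1 + (1 / ((k : ℝ) + 1)))
              Filter.atTop (nhds 1) := by
            have := tendsto_one_div_add_atTop_nhds_zero_nat (𝕜 := ℝ)
            have h2 := this.const_add (1 : ℝ)
            simpa using h2
          have := h1.smul_const y
          simpa using this
        refine mem_closure_of_tendsto htendsto ?_
        filter_upwards with k
        have hk : (1 : ℝ) < 1 + 1 / ((k : ℝ) + 1) := by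
          have : (0:ℝ) < 1 / ((k : ℝ) + 1) := by positivity
          linarith
        have := hout _ hk
        simp only [Set.mem_compl_iff, hKdef, Set.mem_setOf_eq, not_le]
        exact this
    · intro y hy
      have h1 : Hfun n ε y ≤ 1 := hKclosed.frontier_subset hy
      have h2 : 1 ≤ Hfun n ε y := by
        rw [frontier_eq_closure_inter_closure] at hy
        have hsub : closure Kᶜ ⊆ {y : Fin n → ℝ | 1 ≤ Hfun n ε y} := by
          apply closure_minimal
          · intro x hx
            simp only [hKdef, Set.mem_compl_iff, Set.mem_setOf_eq, not_le] at hx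
            exact le_of_lt hx
          · exact isClosed_le continuous_const hHcont
        exact hsub hy.2
      exact le_antisymm h1 h2
  have hrank : 1 < Module.rank ℝ (Fin n → ℝ) := by
    rw [rank_fun']
    rw [Fintype.card_fin]
    exact_mod_cast (by omega : 1 < n)
  have hYconn : IsConnected Y := by
    rw [hYfront]
    exact isConnected_frontier_of_convex hrank hKconv hK0 hKvnb
  have hYcomp : IsCompact Y := by
    rw [hYfront]
    exact hKcomp.of_isClosed_subset isClosed_frontier hKclosed.frontier_subset
  -- the exponential map
  set T : (Fin n → ℝ) → (Fin n → ℝ) := fun y i => Real.exp (y i) with hTdef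
  have hTcont : Continuous T := by
    apply continuous_pi
    intro i
    exact Real.continuous_exp.comp (continuous_apply i)
  have hZT : Z = T '' Y := by
    rw [hZ]
    apply Set.Subset.antisymm
    · rintro x ⟨hxpos, hxeq⟩
      refine ⟨fun i => Real.log (x i), ?_, ?_⟩
      · show Hfun n ε _ = 1
        rw [Hfun_eq]
        have hexp : ∀ i, Real.exp (Real.log (x i)) = x i := fun i => Real.exp_log (hxpos i)
        have hsum : Real.exp (∑ j, Real.log (x j)) = ∏ j, x j := by
          rw [Real.exp_sum]
          exact Finset.prod_congr rfl fun j _ => hexp j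
        simp only [hexp, hsum]
        have hprod : (0:ℝ) < ∏ j, x j := Finset.prod_pos fun j _ => hxpos j
        have : ε * (1 + ∑ i, (x i) ^ (2 * n)) = ∏ j, x j := by linarith
        rw [this]
        field_simp
      · funext i
        exact Real.exp_log (hxpos i)
    · rintro x ⟨y, hy, rfl⟩
      have hy1 : Hfun n ε y = 1 := hy
      rw [Hfun_eq] at hy1
      have hexp : Real.exp (∑ j, y j) = ∏ j, T y j := Real.exp_sum _ _
      constructor
      · intro i; exact Real.exp_pos (y i)
      · have hprod : (0:ℝ) < Real.exp (∑ j, y j) := Real.exp_pos _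
        have h2 : ε * (1 + ∑ i, (Real.exp (y i)) ^ (2*n)) = Real.exp (∑ j, y j) := by
          field_simp at hy1
          linarith [hy1]
        show ε * (1 + ∑ i, (T y i) ^ (2 * n)) - ∏ i, T y i = 0
        have : ∀ i, (T y i) ^ (2*n) = (Real.exp (y i)) ^ (2*n) := fun i => rfl
        simp only [this]
        rw [← hexp, h2]
        ring
  refine ⟨?_, ?_, ?_⟩
  · rw [hZT]
    exact hYconn.image T hTcont.continuousOn
  · rw [hZT]
    exact hYcomp.image hTcont
  · intro x hx
    rw [hZ] at hx
    exact hx.1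
end

section
/- Let A = {a_1, …, a_{n+2}} ⊂ ℤ^n be a circuit of cardinality n+2, let c_1, …, c_{n+2} be nonzero real numbers, and define f : (ℝ∖{0})^n → ℝ by f(x) = Σ_{j=1}^{n+2} c_j x^{a_j}. Then every open orthant of (ℝ∖{0})^n contains at most one degenerate point of the zero set of f, i.e., at most one point ζ with f(ζ) = 0 and ∂f/∂x_i(ζ) = 0 for all i ∈ {1,…,n}. -/
open Finset

/-- A finite family of points of ℝ^n (indexed by Fin N) is a circuit: it is
affinely dependent, but every affine relation supported on a proper subset of
the indices is trivial. -/
def IsCircuitFam {N n : ℕ} (v : Fin N → (Fin n → ℝ)) : Prop :=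
  (∃ γ : Fin N → ℝ, γ ≠ 0 ∧ ∑ j, γ j • v j = 0 ∧ ∑ j, γ j = 0) ∧
  (∀ S : Finset (Fin N), S ≠ Finset.univ →
    ∀ γ : Fin N → ℝ, (∀ j ∉ S, γ j = 0) →
      ∑ j, γ j • v j = 0 → ∑ j, γ j = 0 → γ = 0)

/-- The open orthant of (ℝ∖{0})^n with sign pattern s. -/
def SignOrthant (n : ℕ) (s : Fin n → Bool) : Set (Fin n → ℝ) :=
  {x | ∀ i, if s i then 0 < x i else x i < 0}

/-- From vanishing derivative at a point with nonzero coordinates, deduce the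
vanishing of the i-th "moment" sum. -/
lemma deriv_aux {n : ℕ} (a : Fin (n+2) → Fin n → ℤ) (c : Fin (n+2) → ℝ)
    (ζ : Fin n → ℝ) (hζ : ∀ i, ζ i ≠ 0) (i : Fin n)
    (h : HasDerivAt (fun t : ℝ => ∑ j, c j * ∏ i', (Function.update ζ i t i') ^ (a j i')) 0 (ζ i)) :
    ∑ j, c j * ((a j i : ℝ) * ∏ i', (ζ i') ^ (a j i')) = 0 := by
  set C : Fin (n+2) → ℝ := fun j => ∏ i' ∈ univ.erase i, (ζ i') ^ (a j i') with hC
  have hfun : (fun t : ℝ => ∑ j, c j * ∏ i', (Function.update ζ i t i') ^ (a j i'))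
      = fun t : ℝ => ∑ j, c j * (t ^ (a j i) * C j) := by
    funext t
    refine Finset.sum_congr rfl fun j _ => ?_
    congr 1
    rw [← Finset.mul_prod_erase univ _ (mem_univ i)]
    rw [Function.update_self]
    congr 1
    refine Finset.prod_congr rfl fun i' hi' => ?_
    rw [Function.update_of_ne (Finset.ne_of_mem_erase hi')]
  rw [hfun] at h
  have h2 : HasDerivAt (fun t : ℝ => ∑ j, c j * (t ^ (a j i) * C j))
      (∑ j, c j * ((a j i : ℝ) * (ζ i) ^ (a j i - 1) * C j)) (ζ i) := by
    apply HasDerivAt.fun_sum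
    intro j _
    exact ((hasDerivAt_zpow (a j i) (ζ i) (Or.inl (hζ i))).mul_const (C j)).const_mul (c j)
  have h0 := h.unique h2
  have hz : ∀ m : ℤ, ζ i * ζ i ^ (m - 1) = ζ i ^ m := by
    intro m
    rw [zpow_sub_one₀ (hζ i), mul_comm, mul_assoc, inv_mul_cancel₀ (hζ i), mul_one]
  have key : ∀ j, ζ i * (c j * ((a j i : ℝ) * (ζ i) ^ (a j i - 1) * C j))
      = c j * ((a j i : ℝ) * ∏ i', (ζ i') ^ (a j i')) := by
    intro j
    rw [show (∏ i', (ζ i') ^ (a j i')) = (ζ i) ^ (a j i) * C j from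
      (Finset.mul_prod_erase univ _ (mem_univ i)).symm, ← hz (a j i)]
    ring
  have : ∑ j, c j * ((a j i : ℝ) * ∏ i', (ζ i') ^ (a j i'))
      = ζ i * ∑ j, c j * ((a j i : ℝ) * (ζ i) ^ (a j i - 1) * C j) := by
    rw [Finset.mul_sum]
    exact Finset.sum_congr rfl fun j _ => (key j).symm
  rw [this, ← h0, mul_zero]

/-- For an (n+2)-nomial whose support is a circuit, every open
orthant of (ℝ∖{0})^n contains at most one degenerate point of the real zero
set (a point where f and all its partial derivatives vanish). -/
theorem circuit_one_degenerate_point_per_orthant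
    (n : ℕ) (hn : 1 ≤ n)
    (a : Fin (n + 2) → Fin n → ℤ) (hinj : Function.Injective a)
    (hcirc : IsCircuitFam (fun j => fun i => (a j i : ℝ)))
    (c : Fin (n + 2) → ℝ) (hc : ∀ j, c j ≠ 0) :
    ∀ s : Fin n → Bool,
      {ζ : Fin n → ℝ | ζ ∈ SignOrthant n s ∧
        (∑ j, c j * ∏ i, (ζ i) ^ (a j i) = 0) ∧
        (∀ i : Fin n,
          HasDerivAt
            (fun t : ℝ => ∑ j, c j * ∏ i', (Function.update ζ i t i') ^ (a j i'))
            0 (ζ i))}.Subsingleton := by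
  intro s ζ hζmem ξ hξmem
  obtain ⟨hζo, hζ0, hζd⟩ := hζmem
  obtain ⟨hξo, hξ0, hξd⟩ := hξmem
  have hζo' : ∀ i, if s i then 0 < ζ i else ζ i < 0 := hζo
  have hξo' : ∀ i, if s i then 0 < ξ i else ξ i < 0 := hξo
  have hζne : ∀ i, ζ i ≠ 0 := by
    intro i; have h := hζo' i
    by_cases hs : s i
    · simp [hs] at h; exact h.ne'
    · simp [hs] at h; exact h.ne
  have hξne : ∀ i, ξ i ≠ 0 := by
    intro i; have h := hξo' i
    by_cases hs : s i
    · simp [hs] at h; exact h.ne'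
    · simp [hs] at h; exact h.ne
  have hr : ∀ i, 0 < ξ i / ζ i := by
    intro i; have h1 := hζo' i; have h2 := hξo' i
    by_cases hs : s i
    · simp [hs] at h1 h2; exact div_pos h2 h1
    · simp [hs] at h1 h2; exact div_pos_of_neg_of_neg h2 h1
  -- values of the monomials
  set v : Fin (n+2) → ℝ := fun j => c j * ∏ i, (ζ i) ^ (a j i) with hv
  set w : Fin (n+2) → ℝ := fun j => c j * ∏ i, (ξ i) ^ (a j i) with hw
  have hPζ : ∀ j, (∏ i, (ζ i) ^ (a j i)) ≠ 0 :=
    fun j => Finset.prod_ne_zero_iff.mpr fun i _ => zpow_ne_zero _ (hζne i)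
  have hvne : ∀ j, v j ≠ 0 := fun j => mul_ne_zero (hc j) (hPζ j)
  have hVsum : ∑ j, v j = 0 := hζ0
  have hWsum : ∑ j, w j = 0 := hξ0
  have hVmom : ∀ i, ∑ j, v j * (a j i : ℝ) = 0 := by
    intro i
    have h := deriv_aux a c ζ hζne i (hζd i)
    rw [← h]
    exact Finset.sum_congr rfl fun j _ => by rw [hv]; ring
  have hWmom : ∀ i, ∑ j, w j * (a j i : ℝ) = 0 := by
    intro i
    have h := deriv_aux a c ξ hξne i (hξd i)
    rw [← h]
    exact Finset.sum_congr rfl fun j _ => by rw [hw]; ring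
  -- kernel triviality on the complement of index 0
  have hker : ∀ γ : Fin (n+2) → ℝ, γ 0 = 0 → (∑ j, γ j = 0) →
      (∀ i, ∑ j, γ j * (a j i : ℝ) = 0) → γ = 0 := by
    intro γ h0 hs hm
    refine hcirc.2 (univ.erase 0) ?_ γ ?_ ?_ hs
    · intro hEq
      have h01 : (0 : Fin (n+2)) ∈ univ.erase (0 : Fin (n+2)) := by
        rw [hEq]; exact mem_univ _
      simp at h01
    · intro j hj
      have : j = 0 := by
        by_contra hne
        exact hj (Finset.mem_erase.mpr ⟨hne, mem_univ _⟩)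
      rw [this]; exact h0
    · funext i
      rw [Finset.sum_apply]
      simpa [Pi.smul_apply, smul_eq_mul] using hm i
  -- proportionality: w = μ • v
  set μ : ℝ := w 0 / v 0 with hμ
  have hprop : ∀ j, w j = μ * v j := by
    have h := hker (fun j => w j - μ * v j)
      (by show w 0 - μ * v 0 = 0; rw [hμ, div_mul_cancel₀ _ (hvne 0), sub_self])
      (by rw [Finset.sum_sub_distrib, hWsum, ← Finset.mul_sum, hVsum, mul_zero, sub_zero])
      (by
        intro i
        have : ∀ j, (w j - μ * v j) * (a j i : ℝ)
            = w j * (a j i : ℝ) - μ * (v j * (a j i : ℝ)) := fun j => by ring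
        rw [Finset.sum_congr rfl fun j _ => this j, Finset.sum_sub_distrib,
          hWmom, ← Finset.mul_sum, hVmom, mul_zero, sub_zero])
    intro j
    have := congrFun h j
    simpa [sub_eq_zero] using this
  -- ratio products
  have hR : ∀ j, (∏ i, (ξ i / ζ i) ^ (a j i)) = μ := by
    intro j
    have h1 : (∏ i, (ξ i / ζ i) ^ (a j i))
        = (∏ i, (ξ i) ^ (a j i)) / (∏ i, (ζ i) ^ (a j i)) := by
      rw [← Finset.prod_div_distrib]
      exact Finset.prod_congr rfl fun i _ => div_zpow _ _ _
    have h3 : (∏ i, (ξ i) ^ (a j i)) = μ * ∏ i, (ζ i) ^ (a j i) := by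
      have h2 : c j * ∏ i, (ξ i) ^ (a j i) = μ * (c j * ∏ i, (ζ i) ^ (a j i)) := hprop j
      exact mul_left_cancel₀ (hc j) (by rw [h2]; ring)
    rw [h1, h3, mul_div_assoc, div_self (hPζ j), mul_one]
  have hμpos : 0 < μ := by
    rw [← hR 0]
    exact Finset.prod_pos fun i _ => zpow_pos (hr i) _
  -- logs
  set u : Fin n → ℝ := fun i => Real.log (ξ i / ζ i) with hu
  have hmom : ∀ j, ∑ i, (a j i : ℝ) * u i = Real.log μ := by
    intro j
    rw [← hR j, Real.log_prod (fun i _ => (zpow_pos (hr i) _).ne')]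
    exact Finset.sum_congr rfl fun i _ => (Real.log_zpow _ _).symm
  by_cases hu0 : u = 0
  · funext i
    have h0 : Real.log (ξ i / ζ i) = 0 := congrFun hu0 i
    have h1 : ξ i / ζ i = 1 := by
      rcases Real.log_eq_zero.mp h0 with h | h | h
      · exact absurd h (hr i).ne'
      · exact h
      · exact absurd h (by linarith [hr i])
    have := (div_eq_one_iff_eq (hζne i)).mp h1
    exact this.symm
  · exfalso
    obtain ⟨i0, hi0⟩ : ∃ i, u i ≠ 0 := by
      by_contra h; push_neg at h; exact hu0 (funext h)
    -- linear functional with kernel containing the differences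
    set φ : (Fin n → ℝ) →ₗ[ℝ] ℝ :=
      { toFun := fun y => ∑ i, u i * y i
        map_add' := fun x y => by
          simp only [Pi.add_apply, mul_add]
          rw [Finset.sum_add_distrib]
        map_smul' := fun r y => by
          simp only [Pi.smul_apply, smul_eq_mul, RingHom.id_apply]
          rw [Finset.mul_sum]
          exact Finset.sum_congr rfl fun i _ => by ring } with hφ
    set W : Submodule ℝ (Fin n → ℝ) := LinearMap.ker φ with hW
    have hWne : W < ⊤ := by
      rw [lt_top_iff_ne_top]
      intro hEq
      have h1 : Pi.single i0 (1:ℝ) ∈ W := hEq ▸ Submodule.mem_top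
      have h2 : φ (Pi.single i0 (1:ℝ)) = u i0 := by
        simp [hφ, Pi.single_apply, mul_ite]
      rw [LinearMap.mem_ker, h2] at h1
      exact hi0 h1
    set b : Fin (n+2) → (Fin n → ℝ) := fun j => fun i => (a j i : ℝ) with hb
    set d : Fin n → (Fin n → ℝ) := fun k => b (k.succ.succ) - b 1 with hd
    have hdW : ∀ k, d k ∈ W := by
      intro k
      rw [hW, LinearMap.mem_ker]
      show ∑ i, u i * (d k i) = 0
      have : ∀ i, u i * d k i
          = (a (k.succ.succ) i : ℝ) * u i - (a 1 i : ℝ) * u i := by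
        intro i; simp only [hd, hb, Pi.sub_apply]; ring
      rw [Finset.sum_congr rfl fun i _ => this i, Finset.sum_sub_distrib,
        hmom, hmom, sub_self]
    have hdep : ¬ LinearIndependent ℝ d := by
      intro hind
      have h1 : Submodule.span ℝ (Set.range d) ≤ W :=
        Submodule.span_le.mpr (by rintro _ ⟨k, rfl⟩; exact hdW k)
      have h2 := Submodule.finrank_mono h1
      have h3 : Module.finrank ℝ (Submodule.span ℝ (Set.range d)) = n := by
        rw [finrank_span_eq_card hind, Fintype.card_fin]
      have h4 : Module.finrank ℝ W < n := by
        have h5 := Submodule.finrank_lt hWne.ne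
        rwa [Module.finrank_pi, Fintype.card_fin] at h5
      omega
    obtain ⟨g, hg0, k0, hk0⟩ := Fintype.not_linearIndependent_iff.mp hdep
    set γ : Fin (n+2) → ℝ := Fin.cons 0 (Fin.cons (-∑ k, g k) g) with hγ
    have hγ0 : γ 0 = 0 := by simp [hγ]
    have hγsum : ∑ j, γ j = 0 := by
      rw [hγ, Fin.sum_cons, Fin.sum_cons]; ring
    have hgeval : ∀ i, ∑ k, g k * ((a (Fin.succ (Fin.succ k)) i : ℝ) - (a 1 i : ℝ)) = 0 := by
      intro i
      have := congrFun hg0 i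
      rw [Finset.sum_apply] at this
      simpa [hd, hb, Pi.smul_apply, smul_eq_mul] using this
    have hγmom : ∀ i, ∑ j, γ j * (a j i : ℝ) = 0 := by
      intro i
      have he := hgeval i
      have hrw : ∑ k : Fin n, g k * ((a (Fin.succ (Fin.succ k)) i : ℝ) - (a 1 i : ℝ))
          = (∑ k : Fin n, g k * (a (Fin.succ (Fin.succ k)) i : ℝ))
            - (∑ k, g k) * (a 1 i : ℝ) := by
        rw [Finset.sum_mul, ← Finset.sum_sub_distrib]
        exact Finset.sum_congr rfl fun k _ => by ring
      rw [hrw] at he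
      simp only [hγ, Fin.sum_univ_succ, Fin.cons_zero, Fin.cons_succ, zero_mul, zero_add,
        Fin.succ_zero_eq_one]
      linarith [he]
    have := hker γ hγ0 hγsum hγmom
    have hzk : γ (Fin.succ (Fin.succ k0)) = g k0 := by simp [hγ]
    rw [this] at hzk
    exact hk0 hzk.symm
end

section
/- Let f(x) = Σ_{j=1}^{n+2} c_j x^{a_j} be an n-variate (n+2)-nomial with nonzero real coefficients whose support A = {a_1, …, a_{n+2}} ⊂ ℤ^n is a degenerate circuit of cardinality n+2. Then the zero set Z_+(f) of f in ℝ^n_+ is a (possibly empty) smooth embedded (n−1)-dimensional submanifold of ℝ^n_+, and every connected component of Z_+(f) is non-compact. -/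
open Finset Set

lemma prod_update_zpow {n : ℕ} (x : Fin n → ℝ) (i : Fin n) (t : ℝ) (m : Fin n → ℤ) :
    ∏ i', (Function.update x i t i') ^ m i'
      = t ^ m i * ∏ i' ∈ univ.erase i, (x i') ^ m i' := by
  rw [← Finset.mul_prod_erase univ _ (mem_univ i)]
  congr 1
  · rw [Function.update_self]
  · apply Finset.prod_congr rfl
    intro i' hi'
    rw [Function.update_of_ne (Finset.ne_of_mem_erase hi')]

lemma deriv_term {n : ℕ} (x : Fin n → ℝ) (i : Fin n) (hx : x i ≠ 0)
    (c : Fin (n+2) → ℝ) (a : Fin (n+2) → Fin n → ℤ) :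
    HasDerivAt
      (fun t : ℝ => ∑ j, c j * ∏ i', (Function.update x i t i') ^ (a j i'))
      (∑ j, c j * ((a j i : ℝ) * x i ^ (a j i - 1) *
        ∏ i' ∈ univ.erase i, (x i') ^ (a j i'))) (x i) := by
  have h : (fun t : ℝ => ∑ j, c j * ∏ i', (Function.update x i t i') ^ (a j i'))
      = fun t : ℝ => ∑ j, (c j * ∏ i' ∈ univ.erase i, (x i') ^ (a j i')) * t ^ (a j i) := by
    funext t
    apply Finset.sum_congr rfl
    intro j _
    rw [prod_update_zpow]
    ring
  rw [h]
  have := HasDerivAt.sum (u := univ)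
    (A := fun (j : Fin (n+2)) (t : ℝ) => (c j * ∏ i' ∈ univ.erase i, (x i') ^ (a j i')) * t ^ (a j i))
    (A' := fun j => (c j * ∏ i' ∈ univ.erase i, (x i') ^ (a j i')) * ((a j i : ℝ) * x i ^ (a j i - 1)))
    (x := x i)
    (fun j _ => (hasDerivAt_zpow (a j i) (x i) (Or.inl hx)).const_mul _)
  rw [Finset.sum_fn] at this
  refine this.congr_deriv ?_
  apply Finset.sum_congr rfl
  intro j _
  ring

lemma regular_point {n : ℕ} (a : Fin (n+2) → Fin n → ℤ) (c : Fin (n+2) → ℝ)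
    (hc : ∀ j, c j ≠ 0) (j0 j1 : Fin (n+2)) (γ : Fin (n+2) → ℝ)
    (hindep : ∀ δ : Fin (n+2) → ℝ, δ j0 = 0 →
      ∑ j, δ j • (fun i => (a j i : ℝ)) = 0 → ∑ j, δ j = 0 → δ = 0)
    (hγj0 : γ j0 ≠ 0) (hγj1 : γ j1 = 0)
    (hγdep : ∑ j, γ j • (fun i => (a j i : ℝ)) = 0) (hγsum : ∑ j, γ j = 0)
    (x : Fin n → ℝ) (hxpos : ∀ i, 0 < x i)
    (hxzero : ∑ j, c j * ∏ i, (x i) ^ (a j i) = 0) :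
    ∃ (i : Fin n) (d : ℝ), d ≠ 0 ∧
      HasDerivAt
        (fun t : ℝ => ∑ j, c j * ∏ i', (Function.update x i t i') ^ (a j i'))
        d (x i) := by
  by_contra hcon
  push_neg at hcon
  set D : Fin n → ℝ := fun i => ∑ j, c j * ((a j i : ℝ) * x i ^ (a j i - 1) *
    ∏ i' ∈ univ.erase i, (x i') ^ (a j i')) with hD
  have hDzero : ∀ i, D i = 0 := by
    intro i
    by_contra hne
    exact hcon i (D i) hne (deriv_term x i (hxpos i).ne' c a)
  set y : Fin (n+2) → ℝ := fun j => c j * ∏ i, (x i) ^ (a j i) with hy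
  have hya : ∀ i, ∑ j, y j * (a j i : ℝ) = 0 := by
    intro i
    have hxi := (hxpos i).ne'
    have : x i * D i = ∑ j, y j * (a j i : ℝ) := by
      rw [hD, Finset.mul_sum]
      apply Finset.sum_congr rfl
      intro j _
      have h1 : x i * x i ^ (a j i - 1) = x i ^ (a j i) := by
        rw [zpow_sub_one₀ hxi]
        field_simp
      have h2 : ∏ i', (x i') ^ (a j i')
          = x i ^ (a j i) * ∏ i' ∈ univ.erase i, (x i') ^ (a j i') := by
        rw [← Finset.mul_prod_erase univ _ (mem_univ i)]
      calc x i * (c j * ((a j i : ℝ) * x i ^ (a j i - 1) *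
              ∏ i' ∈ univ.erase i, (x i') ^ (a j i')))
          = c j * ((a j i : ℝ) * (x i * x i ^ (a j i - 1)) *
              ∏ i' ∈ univ.erase i, (x i') ^ (a j i')) := by ring
        _ = c j * ((a j i : ℝ) * x i ^ (a j i) *
              ∏ i' ∈ univ.erase i, (x i') ^ (a j i')) := by rw [h1]
        _ = y j * (a j i : ℝ) := by rw [hy]; dsimp only; rw [h2]; ring
    rw [← this, hDzero i, mul_zero]
  have hysum : ∑ j, y j = 0 := hxzero
  have hγa : ∀ i, ∑ j, γ j * (a j i : ℝ) = 0 := by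
    intro i
    have := congrFun hγdep i
    simpa [Finset.sum_apply] using this
  set δ : Fin (n+2) → ℝ := fun j => γ j0 * y j - y j0 * γ j with hδ
  have hδ0 : δ = 0 := by
    apply hindep
    · simp [hδ]; ring
    · funext i
      have : ∑ j, δ j * (a j i : ℝ) = 0 := by
        have : ∑ j, δ j * (a j i : ℝ)
            = γ j0 * (∑ j, y j * (a j i : ℝ)) - y j0 * (∑ j, γ j * (a j i : ℝ)) := by
          rw [Finset.mul_sum, Finset.mul_sum, ← Finset.sum_sub_distrib]
          apply Finset.sum_congr rfl
          intro j _
          simp [hδ]; ring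
        rw [this, hya i, hγa i]; ring
      simpa [Finset.sum_apply] using this
    · have : ∑ j, δ j = γ j0 * (∑ j, y j) - y j0 * (∑ j, γ j) := by
        rw [Finset.mul_sum, Finset.mul_sum, ← Finset.sum_sub_distrib]
      rw [this, hysum, hγsum]; ring
  have hyj1 : y j1 ≠ 0 := by
    apply mul_ne_zero (hc j1)
    apply ne_of_gt
    exact Finset.prod_pos fun i _ => zpow_pos (hxpos i) _
  have := congrFun hδ0 j1
  simp only [hδ, Pi.zero_apply, hγj1, mul_zero, sub_zero] at this
  exact hyj1 (by
    rcases mul_eq_zero.mp this with h | h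
    · exact absurd h hγj0
    · exact h)


lemma component_image {X Y : Type*} [TopologicalSpace X] [TopologicalSpace Y]
    {Z : Set X} {Z' : Set Y} {f : X → Y} {g : Y → X}
    (hfc : ContinuousOn f Z) (hgc : Continuous g)
    (hfZ : Set.MapsTo f Z Z') (hgZ : Set.MapsTo g Z' Z)
    (hgf : ∀ x ∈ Z, g (f x) = x) (hfg : ∀ u ∈ Z', f (g u) = u)
    {x0 : X} (hx0 : x0 ∈ Z) :
    f '' (connectedComponentIn Z x0) = connectedComponentIn Z' (f x0) := by
  apply Set.Subset.antisymm
  · apply IsPreconnected.subset_connectedComponentIn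
    · exact isPreconnected_connectedComponentIn.image f
        (hfc.mono (connectedComponentIn_subset Z x0))
    · exact ⟨x0, mem_connectedComponentIn hx0, rfl⟩
    · rintro y ⟨x, hx, rfl⟩
      exact hfZ (connectedComponentIn_subset _ _ hx)
  · have h2 : g '' (connectedComponentIn Z' (f x0)) ⊆ connectedComponentIn Z x0 := by
      apply IsPreconnected.subset_connectedComponentIn
      · exact isPreconnected_connectedComponentIn.image g hgc.continuousOn
      · exact ⟨f x0, mem_connectedComponentIn (hfZ hx0), hgf x0 hx0⟩
      · rintro y ⟨u, hu, rfl⟩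
        exact hgZ (connectedComponentIn_subset _ _ hu)
    intro u hu
    exact ⟨g u, h2 ⟨u, hu, rfl⟩,
      hfg u (connectedComponentIn_subset _ _ hu)⟩


lemma graph_noncompact {ι : Type*} [Fintype ι] [DecidableEq ι] (j1 : ι)
    (hcard : 2 ≤ Fintype.card ι)
    (F G : (ι → ℝ) → ℝ) (cs : ℝ) (hcs : cs ≠ 0) (hG : Continuous G)
    (hFG : ∀ u, F u = cs * Real.exp (u j1) + G u)
    (hGind : ∀ u t, G (Function.update u j1 t) = G u)
    (u0 : ι → ℝ) (hu0 : F u0 = 0) :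
    ¬ IsCompact (connectedComponentIn {u | F u = 0} u0) := by
  intro hC
  set Z' : Set (ι → ℝ) := {u | F u = 0} with hZ'
  set C := connectedComponentIn Z' u0 with hCdef
  have hCZ : C ⊆ Z' := connectedComponentIn_subset _ _
  -- the projection
  set π : (ι → ℝ) → (ι → ℝ) := fun u => Function.update u j1 0 with hπ
  have hπcont : Continuous π := by
    apply continuous_pi
    intro j
    by_cases hj : j = j1
    · subst hj; simpa [π] using continuous_const
    · simpa [π, Function.update_apply, hj] using continuous_apply j
  set H : Set (ι → ℝ) := {v | v j1 = 0} with hH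
  have hHconv : Convex ℝ H := by
    intro v hv w hw s t _ _ _
    simp only [H, mem_setOf_eq] at *
    simp [hv, hw]
  set V : Set (ι → ℝ) := π '' C with hV
  have hVcomp : IsCompact V := hC.image hπcont
  have hVH : V ⊆ H := by
    rintro v ⟨u, _, rfl⟩
    simp [π, H]
  have hVne : V.Nonempty := ⟨π u0, u0, mem_connectedComponentIn hu0, rfl⟩
  -- the key openness-in-H property
  have key : ∀ v ∈ V, ∃ ε > 0, Metric.ball v ε ∩ H ⊆ V := by
    rintro vb ⟨ub, hubC, rfl⟩
    have hubZ : F ub = 0 := hCZ hubC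
    have hGπ : G (π ub) = G ub := hGind ub 0
    have hexp : -G (π ub) / cs = Real.exp (ub j1) := by
      rw [hGπ]
      have := hFG ub
      rw [hubZ] at this
      field_simp
      linarith
    have hvbW : 0 < -G (π ub) / cs := by rw [hexp]; exact Real.exp_pos _
    have hWopen : IsOpen {v : ι → ℝ | 0 < -G v / cs} :=
      isOpen_lt continuous_const ((hG.neg).div_const cs)
    obtain ⟨ε, hε, hball⟩ := Metric.isOpen_iff.mp hWopen (π ub) hvbW
    refine ⟨ε, hε, ?_⟩
    set θ : (ι → ℝ) → (ι → ℝ) := fun v => Function.update v j1 (Real.log (-G v / cs))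
      with hθ
    have hθcont : ContinuousOn θ (Metric.ball (π ub) ε) := by
      apply continuousOn_pi.mpr
      intro j
      by_cases hj : j = j1
      · subst hj
        simp only [θ, Function.update_self]
        intro v hv
        have hvW : 0 < -G v / cs := hball hv
        exact ContinuousAt.continuousWithinAt
          (ContinuousAt.log (((hG.neg).div_const cs).continuousAt) (ne_of_gt hvW))
      · intro v hv
        simp only [θ, Function.update_apply, hj, if_false]
        exact (continuous_apply j).continuousWithinAt
    have hθZ : ∀ v ∈ Metric.ball (π ub) ε, θ v ∈ Z' := by
      intro v hv
      have hvW : 0 < -G v / cs := hball hv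
      have : F (θ v) = cs * Real.exp (Real.log (-G v / cs)) + G (θ v) := by
        rw [hFG]; simp [θ]
      rw [Real.exp_log hvW, hGind] at this
      simp only [Z', mem_setOf_eq, this]
      field_simp
      ring
    have hθvb : θ (π ub) = ub := by
      have hl : Real.log (-G (π ub) / cs) = ub j1 := by rw [hexp, Real.log_exp]
      simp only [θ, π, hl]
      rw [Function.update_idem, Function.update_eq_self]
    -- image of ball ∩ H is connected, within Z', contains ub
    have himg : θ '' (Metric.ball (π ub) ε ∩ H) ⊆ C := by
      have hpre : IsPreconnected (θ '' (Metric.ball (π ub) ε ∩ H)) :=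
        (((convex_ball _ _).inter hHconv).isPreconnected).image θ
          (hθcont.mono inter_subset_left)
      have hsub : θ '' (Metric.ball (π ub) ε ∩ H) ⊆ Z' := by
        rintro y ⟨v, hv, rfl⟩; exact hθZ v hv.1
      have hmem : ub ∈ θ '' (Metric.ball (π ub) ε ∩ H) :=
        ⟨π ub, ⟨Metric.mem_ball_self hε, by simp [π, H]⟩, hθvb⟩
      have := hpre.subset_connectedComponentIn hmem hsub
      rwa [← connectedComponentIn_eq hubC] at this
    intro v hv
    have hθvC : θ v ∈ C := himg ⟨v, hv, rfl⟩
    have hπθ : π (θ v) = v := by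
      simp only [π, θ]
      rw [Function.update_idem]
      have : v j1 = 0 := hv.2
      rw [← this, Function.update_eq_self]
    exact ⟨θ v, hθvC, hπθ⟩
  -- now the clopen argument on H
  classical
  set U1 : Set (ι → ℝ) :=
    ⋃ (p : {p : (ι → ℝ) × ℝ // p.1 ∈ V ∧ 0 < p.2 ∧ Metric.ball p.1 p.2 ∩ H ⊆ V}),
      Metric.ball p.1.1 p.1.2 with hU1
  have hU1open : IsOpen U1 := isOpen_iUnion fun p => Metric.isOpen_ball
  have hU1H : H ∩ U1 = V := by
    apply Set.Subset.antisymm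
    · rintro w ⟨hwH, hwU⟩
      obtain ⟨p, hp⟩ := mem_iUnion.mp hwU
      exact p.2.2.2 ⟨hp, hwH⟩
    · intro v hv
      obtain ⟨ε, hε, hsub⟩ := key v hv
      exact ⟨hVH hv, mem_iUnion.mpr ⟨⟨(v, ε), hv, hε, hsub⟩, Metric.mem_ball_self hε⟩⟩
  have hU2open : IsOpen Vᶜ := hVcomp.isClosed.isOpen_compl
  have hHV : H ⊆ V := by
    by_contra hnot
    obtain ⟨w, hwH, hwV⟩ := Set.not_subset.mp hnot
    have hpre := hHconv.isPreconnected
    have hcover : H ⊆ U1 ∪ Vᶜ := by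
      intro v hv
      by_cases h : v ∈ V
      · left; rw [← hU1H] at h; exact h.2
      · right; exact h
    obtain ⟨z, hz⟩ := hpre U1 Vᶜ hU1open hU2open hcover
      (by
        obtain ⟨v, hv⟩ := hVne
        have hv' : v ∈ H ∩ U1 := by rw [hU1H]; exact hv
        exact ⟨v, hv'.1, hv'.2⟩)
      ⟨w, hwH, hwV⟩
    have hzV : z ∈ V := by rw [← hU1H]; exact ⟨hz.1, hz.2.1⟩
    exact hz.2.2 hzV
  -- H compact: contradiction
  have hHcomp : IsCompact H := hVcomp.of_isClosed_subset ?hcl hHV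
  case hcl =>
    have : H = (fun v : ι → ℝ => v j1) ⁻¹' {0} := rfl
    rw [this]
    exact IsClosed.preimage (continuous_apply j1) isClosed_singleton
  obtain ⟨jst, hjne⟩ := Fintype.exists_ne_of_one_lt_card (by omega) j1
  have himg : (fun v : ι → ℝ => v jst) '' H = Set.univ := by
    apply Set.eq_univ_of_forall
    intro r
    exact ⟨fun j => if j = j1 then 0 else r, by simp [H], by simp [hjne]⟩
  have : IsCompact (Set.univ : Set ℝ) := himg ▸ hHcomp.image (continuous_apply jst)
  exact noncompact_univ ℝ this


section
variable {n : ℕ}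

lemma part2 (hn2 : 2 ≤ n)
    (a : Fin (n+2) → Fin n → ℤ) (c : Fin (n+2) → ℝ) (hc : ∀ j, c j ≠ 0)
    (j0 j1 j2 : Fin (n+2)) (hj1j0 : j1 ≠ j0) (hj2j0 : j2 ≠ j0) (hj2j1 : j2 ≠ j1)
    (γ : Fin (n+2) → ℝ)
    (hindep : ∀ δ : Fin (n+2) → ℝ, δ j0 = 0 →
      ∑ j, δ j • (fun i => (a j i : ℝ)) = 0 → ∑ j, δ j = 0 → δ = 0)
    (hγj0 : γ j0 ≠ 0) (hγj1 : γ j1 = 0)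
    (hγdep : ∑ j, γ j • (fun i => (a j i : ℝ)) = 0) (hγsum : ∑ j, γ j = 0)
    (x0 : Fin n → ℝ)
    (hx0 : x0 ∈ {x : Fin n → ℝ | (∀ i, 0 < x i) ∧ ∑ j, c j * ∏ i, (x i) ^ (a j i) = 0}) :
    ¬ IsCompact (connectedComponentIn
      {x : Fin n → ℝ | (∀ i, 0 < x i) ∧ ∑ j, c j * ∏ i, (x i) ^ (a j i) = 0} x0) := by
  classical
  set Z : Set (Fin n → ℝ) :=
    {x : Fin n → ℝ | (∀ i, 0 < x i) ∧ ∑ j, c j * ∏ i, (x i) ^ (a j i) = 0} with hZdef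
  -- basic data
  have hj0j2 : j0 ≠ j2 := fun h => hj2j0 h.symm
  have hj1j2 : j1 ≠ j2 := fun h => hj2j1 h.symm
  set d : Fin (n+2) → Fin n → ℝ := fun j i => (a j i : ℝ) - (a j2 i : ℝ) with hd
  set Jset : Finset (Fin (n+2)) := univ \ {j0, j2} with hJset
  have hj0J : j0 ∉ Jset := by simp [hJset]
  have hj2J : j2 ∉ Jset := by simp [hJset]
  have hj1J : j1 ∈ Jset := by
    rw [hJset, Finset.mem_sdiff]
    refine ⟨mem_univ _, ?_⟩
    simp [hj1j0, hj1j2]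
  have hcardJ : Fintype.card {j // j ∈ Jset} = n := by
    rw [Fintype.card_coe, hJset, card_sdiff_of_subset (subset_univ _), card_univ,
      Finset.card_pair hj0j2, Fintype.card_fin]
    omega
  -- pointwise dependence relations
  have hγa : ∀ i, ∑ j, γ j * (a j i : ℝ) = 0 := by
    intro i
    have := congrFun hγdep i
    simpa [Finset.sum_apply] using this
  -- splitting of sums
  have hsplit : ∀ g : Fin (n+2) → ℝ, ∑ j, g j = g j0 + g j2 + ∑ j ∈ Jset, g j := by
    intro g
    rw [hJset, Finset.sum_sdiff_eq_sub (subset_univ _), Finset.sum_pair hj0j2]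
    ring
  have hγd : ∀ i, ∑ j ∈ Jset, γ j * d j i = -(γ j0 * d j0 i) := by
    intro i
    have h0 : ∑ j, γ j * d j i = 0 := by
      have : ∑ j, γ j * d j i = (∑ j, γ j * (a j i : ℝ)) - (∑ j, γ j) * (a j2 i : ℝ) := by
        rw [Finset.sum_mul, ← Finset.sum_sub_distrib]
        apply Finset.sum_congr rfl
        intro j _
        simp [hd]; ring
      rw [this, hγa i, hγsum]; ring
    have := hsplit (fun j => γ j * d j i)
    rw [h0] at this
    have hdj2 : d j2 i = 0 := by simp [hd]
    rw [hdj2, mul_zero] at this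
    linarith
  -- the Gale vector b
  set b : {j // j ∈ Jset} → ℝ := fun j => -γ j.1 / γ j0 with hb
  have hbj1 : ∀ h : j1 ∈ Jset, b ⟨j1, h⟩ = 0 := by
    intro h; simp [hb, hγj1]
  have hbd : ∀ i, ∑ j : {j // j ∈ Jset}, b j * d j.1 i = d j0 i := by
    intro i
    have h1 : ∑ j : {j // j ∈ Jset}, b j * d j.1 i
        = ∑ j ∈ Jset, (-γ j / γ j0 * d j i) :=
      Finset.sum_coe_sort Jset (fun j => -γ j / γ j0 * d j i)
    rw [h1]
    have h2 : ∑ j ∈ Jset, (-γ j / γ j0 * d j i)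
        = (-(1 / γ j0)) * ∑ j ∈ Jset, γ j * d j i := by
      rw [Finset.mul_sum]
      apply Finset.sum_congr rfl
      intro j _
      field_simp
    rw [h2, hγd i]
    field_simp
  -- linear independence of the rows d j, j ∈ Jset
  have hrows : LinearIndependent ℝ (fun j : {j // j ∈ Jset} => (fun i => d j.1 i)) := by
    rw [Fintype.linearIndependent_iff]
    intro t ht
    set γ' : Fin (n+2) → ℝ := fun j =>
      if h : j ∈ Jset then t ⟨j, h⟩ else if j = j2 then -∑ j' : {j // j ∈ Jset}, t j' else 0
      with hγ'
    have hγ'j0 : γ' j0 = 0 := by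
      simp [hγ', hj0J, hj0j2]
    have hγ'j2 : γ' j2 = -∑ j' : {j // j ∈ Jset}, t j' := by
      simp [hγ', hj2J]
    have hγ'J : ∑ j ∈ Jset, γ' j = ∑ j' : {j // j ∈ Jset}, t j' := by
      rw [← Finset.sum_coe_sort Jset γ']
      apply Finset.sum_congr rfl
      intro j _
      simp [hγ', j.2]
    have htd : ∀ i, ∑ j' : {j // j ∈ Jset}, t j' * d j'.1 i = 0 := by
      intro i
      have := congrFun ht i
      simpa [Finset.sum_apply] using this
    have h0 : γ' = 0 := by
      apply hindep
      · exact hγ'j0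
      · funext i
        have hJ : ∑ j ∈ Jset, γ' j * (a j i : ℝ)
            = ∑ j' : {j // j ∈ Jset}, t j' * (a j'.1 i : ℝ) := by
          rw [← Finset.sum_coe_sort Jset (fun j => γ' j * (a j i : ℝ))]
          apply Finset.sum_congr rfl
          intro j _
          simp [hγ', j.2]
        have : ∑ j, γ' j * (a j i : ℝ) = 0 := by
          rw [hsplit (fun j => γ' j * (a j i : ℝ))]
          show γ' j0 * _ + γ' j2 * _ + _ = 0
          rw [hγ'j0, hγ'j2, hJ]
          have expand : ∑ j' : {j // j ∈ Jset}, t j' * (a j'.1 i : ℝ)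
              = ∑ j' : {j // j ∈ Jset}, t j' * d j'.1 i
                + (∑ j' : {j // j ∈ Jset}, t j') * (a j2 i : ℝ) := by
            rw [Finset.sum_mul, ← Finset.sum_add_distrib]
            apply Finset.sum_congr rfl
            intro j _
            simp [hd]; ring
          rw [expand, htd i]; ring
        simpa [Finset.sum_apply] using this
      · rw [hsplit γ', hγ'j0, hγ'j2, hγ'J]; ring
    intro j
    have := congrFun h0 j.1
    simpa [hγ', j.2] using this
  have hJne : Nonempty {j // j ∈ Jset} := by
    rw [← Fintype.card_pos_iff, hcardJ]; omega
  have hfr : Fintype.card {j // j ∈ Jset} = Module.finrank ℝ (Fin n → ℝ) := by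
    rw [hcardJ, Module.finrank_pi, Fintype.card_fin]
  -- the linear map and its bijectivity
  set L : (Fin n → ℝ) →ₗ[ℝ] ({j // j ∈ Jset} → ℝ) :=
    Matrix.mulVecLin (Matrix.of fun (j : {j // j ∈ Jset}) i => d j.1 i) with hL
  have hLapp : ∀ ξ (j : {j // j ∈ Jset}), L ξ j = ∑ i, d j.1 i * ξ i := by
    intro ξ j
    simp [hL, Matrix.mulVecLin_apply, Matrix.mulVec, dotProduct]
  have hLker : ∀ ξ, L ξ = 0 → ξ = 0 := by
    intro ξ hξ
    set φ : (Fin n → ℝ) →ₗ[ℝ] ℝ :=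
      { toFun := fun w => ∑ k, w k * ξ k
        map_add' := by
          intro w1 w2
          rw [← Finset.sum_add_distrib]
          apply Finset.sum_congr rfl
          intro k _
          simp [add_mul]
        map_smul' := by
          intro r w
          simp only [Pi.smul_apply, smul_eq_mul, RingHom.id_apply]
          rw [Finset.mul_sum]
          apply Finset.sum_congr rfl
          intro k _
          ring } with hφ
    have hrange : Set.range (fun j : {j // j ∈ Jset} => (fun i => d j.1 i)) ⊆
        ↑(LinearMap.ker φ) := by
      rintro w ⟨j, rfl⟩
      have := congrFun hξ j
      simp only [Pi.zero_apply] at this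
      rw [hLapp] at this
      simpa [hφ, LinearMap.mem_ker] using this
    have hspan : Submodule.span ℝ
        (Set.range (fun j : {j // j ∈ Jset} => (fun i => d j.1 i))) = ⊤ := by
      have hB := Module.Basis.span_eq (basisOfLinearIndependentOfCardEqFinrank hrows hfr)
      rwa [coe_basisOfLinearIndependentOfCardEqFinrank] at hB
    have htop : (⊤ : Submodule ℝ (Fin n → ℝ)) ≤ LinearMap.ker φ := by
      rw [← hspan]
      exact Submodule.span_le.mpr hrange
    funext i
    have hmem : Pi.single i (1:ℝ) ∈ LinearMap.ker φ := htop trivial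
    rw [LinearMap.mem_ker] at hmem
    have : φ (Pi.single i (1:ℝ)) = ξ i := by
      simp only [hφ, LinearMap.coe_mk, AddHom.coe_mk]
      rw [Finset.sum_eq_single i]
      · simp
      · intro k _ hk
        simp [Pi.single_eq_of_ne hk]
      · intro h; exact absurd (Finset.mem_univ i) h
    rw [this] at hmem
    simpa using hmem
  have hLinj : Function.Injective L := by
    intro ξ1 ξ2 h
    have := hLker (ξ1 - ξ2) (by rw [map_sub, h, sub_self])
    exact sub_eq_zero.mp this
  have hLbij : Function.Bijective L := by
    refine ⟨hLinj, (LinearMap.injective_iff_surjective_of_finrank_eq_finrank ?_).mp hLinj⟩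
    rw [Module.finrank_pi, Module.finrank_pi, Fintype.card_fin, hcardJ]
  set Leq := LinearEquiv.ofBijective L hLbij with hLeq
  -- coordinates
  set P : (Fin n → ℝ) → ({j // j ∈ Jset} → ℝ) := fun x => Leq (fun i => Real.log (x i))
    with hP
  set Pinv : ({j // j ∈ Jset} → ℝ) → (Fin n → ℝ) := fun u i => Real.exp (Leq.symm u i)
    with hPinv
  have hLeqL : ∀ ξ, Leq ξ = L ξ := fun ξ => rfl
  have hPapp : ∀ (x : Fin n → ℝ) (j : {j // j ∈ Jset}),
      P x j = ∑ i, d j.1 i * Real.log (x i) := by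
    intro x j
    simp only [hP, hLeqL]
    rw [hLapp]
  have hPsymm : ∀ x : Fin n → ℝ, Leq.symm (P x) = fun i => Real.log (x i) := by
    intro x
    simp only [hP]
    exact Leq.symm_apply_apply _
  have hPinvP : ∀ x : Fin n → ℝ, (∀ i, 0 < x i) → Pinv (P x) = x := by
    intro x hx
    funext i
    simp only [hPinv, hPsymm x]
    exact Real.exp_log (hx i)
  have hPPinv : ∀ u, P (Pinv u) = u := by
    intro u
    simp only [hP, hPinv]
    have h : (fun i => Real.log (Real.exp (Leq.symm u i))) = Leq.symm u := by
      funext i; exact Real.log_exp _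
    rw [h, LinearEquiv.apply_symm_apply]
  have hLeqcont : Continuous Leq := LinearMap.continuous_of_finiteDimensional Leq.toLinearMap
  have hLeqscont : Continuous Leq.symm :=
    LinearMap.continuous_of_finiteDimensional Leq.symm.toLinearMap
  have hPcont : ContinuousOn P {x : Fin n → ℝ | ∀ i, 0 < x i} := by
    have hlog : ContinuousOn (fun x : Fin n → ℝ => fun i => Real.log (x i))
        {x : Fin n → ℝ | ∀ i, 0 < x i} := by
      rw [continuousOn_pi]
      intro i
      exact ContinuousOn.log ((continuous_apply i).continuousOn)
        (fun x hx => (hx i).ne')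
    have := hLeqcont.comp_continuousOn hlog
    exact this
  have hPinvcont : Continuous Pinv := by
    apply continuous_pi
    intro i
    exact Real.continuous_exp.comp ((continuous_apply i).comp hLeqscont)
  -- the exponential-sum functions
  set E : ({j // j ∈ Jset} → ℝ) → Fin (n+2) → ℝ := fun u j =>
    if h : j ∈ Jset then u ⟨j, h⟩
    else if j = j0 then ∑ j' : {j // j ∈ Jset}, b j' * u j' else 0 with hE
  set F : ({j // j ∈ Jset} → ℝ) → ℝ := fun u => ∑ j, c j * Real.exp (E u j) with hF
  set G : ({j // j ∈ Jset} → ℝ) → ℝ := fun u => ∑ j ∈ univ.erase j1, c j * Real.exp (E u j)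
    with hG
  have hEP : ∀ (x : Fin n → ℝ) (j : Fin (n+2)),
      E (P x) j = ∑ i, d j i * Real.log (x i) := by
    intro x j
    by_cases h : j ∈ Jset
    · rw [hE]
      simp only [dif_pos h]
      exact hPapp x ⟨j, h⟩
    · have hj : j = j0 ∨ j = j2 := by
        rw [hJset] at h
        simp only [Finset.mem_sdiff, Finset.mem_univ, true_and, not_not,
          Finset.mem_insert, Finset.mem_singleton] at h
        exact h
      rcases hj with hj | hj
      · subst hj
        rw [hE]
        simp only [dif_neg h, if_pos rfl]
        have step1 : ∑ j' : {j // j ∈ Jset}, b j' * P x j'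
            = ∑ j' : {j // j ∈ Jset}, ∑ i, b j' * (d j'.1 i * Real.log (x i)) := by
          apply Finset.sum_congr rfl
          intro j' _
          rw [hPapp x j', Finset.mul_sum]
        rw [step1, Finset.sum_comm]
        apply Finset.sum_congr rfl
        intro i _
        have : ∑ j' : {j // j ∈ Jset}, b j' * (d j'.1 i * Real.log (x i))
            = (∑ j' : {j // j ∈ Jset}, b j' * d j'.1 i) * Real.log (x i) := by
          rw [Finset.sum_mul]
          apply Finset.sum_congr rfl
          intro j' _
          ring
        rw [this, hbd i]
      · subst hj
        rw [hE]
        simp only [dif_neg h, if_neg hj0j2.symm]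
        have hdz : ∀ i, d j i = 0 := by intro i; simp [hd]
        simp [hdz]
  -- the distinguished coordinate
  set j1' : {j // j ∈ Jset} := ⟨j1, hj1J⟩ with hj1'
  -- identity  f = monomial * F ∘ P
  have hfF : ∀ x : Fin n → ℝ, (∀ i, 0 < x i) →
      ∑ j, c j * ∏ i, (x i) ^ (a j i) = (∏ i, (x i) ^ (a j2 i)) * F (P x) := by
    intro x hx
    rw [hF]
    simp only
    rw [Finset.mul_sum]
    apply Finset.sum_congr rfl
    intro j _
    rw [hEP x j]
    have hexp : Real.exp (∑ i, d j i * Real.log (x i))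
        = ∏ i, ((x i) ^ (a j i) * ((x i) ^ (a j2 i))⁻¹) := by
      rw [Real.exp_sum]
      apply Finset.prod_congr rfl
      intro i _
      have h1 : d j i * Real.log (x i) = Real.log (x i) * ((a j i - a j2 i : ℤ) : ℝ) := by
        simp only [hd]; push_cast; ring
      rw [h1, ← Real.rpow_def_of_pos (hx i), Real.rpow_intCast,
        zpow_sub₀ (hx i).ne', div_eq_mul_inv]
    rw [hexp, Finset.prod_mul_distrib]
    have hpos2 : (0:ℝ) < ∏ i, (x i) ^ (a j2 i) :=
      Finset.prod_pos fun i _ => zpow_pos (hx i) _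
    field_simp
    rw [Finset.prod_div_distrib, Finset.prod_const_one, mul_assoc, mul_one_div_cancel hpos2.ne', mul_one]
  have hZchar : ∀ x : Fin n → ℝ, x ∈ Z ↔ ((∀ i, 0 < x i) ∧ F (P x) = 0) := by
    intro x
    constructor
    · rintro ⟨hp, hz⟩
      refine ⟨hp, ?_⟩
      have hid := hfF x hp
      rw [hz] at hid
      have hpos2 : (0:ℝ) < ∏ i, (x i) ^ (a j2 i) :=
        Finset.prod_pos fun i _ => zpow_pos (hp i) _
      rcases mul_eq_zero.mp hid.symm with h | h
      · exact absurd h hpos2.ne'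
      · exact h
    · rintro ⟨hp, hz⟩
      exact ⟨hp, by rw [hfF x hp, hz, mul_zero]⟩
  have hFsplit : ∀ u, F u = c j1 * Real.exp (u j1') + G u := by
    intro u
    rw [hF, hG]
    simp only
    rw [← Finset.add_sum_erase univ _ (Finset.mem_univ j1)]
    have hEj1 : E u j1 = u j1' := by
      rw [hE]; simp only [dif_pos hj1J]; rfl
    rw [hEj1]
  have hEind : ∀ u t (j : Fin (n+2)), j ≠ j1 → E (Function.update u j1' t) j = E u j := by
    intro u t j hj
    by_cases h : j ∈ Jset
    · rw [hE]
      simp only [dif_pos h]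
      apply Function.update_of_ne
      intro he
      exact hj (congrArg Subtype.val he)
    · rw [hE]
      simp only [dif_neg h]
      by_cases h0 : j = j0
      · simp only [if_pos h0]
        apply Finset.sum_congr rfl
        intro j' _
        by_cases hj' : j' = j1'
        · subst hj'
          rw [hbj1 hj1J]
          simp
        · rw [Function.update_of_ne hj']
      · simp only [if_neg h0]
  have hGind : ∀ u t, G (Function.update u j1' t) = G u := by
    intro u t
    rw [hG]
    simp only
    apply Finset.sum_congr rfl
    intro j hj
    rw [hEind u t j (Finset.ne_of_mem_erase hj)]
  have hGcont : Continuous G := by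
    rw [hG]
    apply continuous_finset_sum
    intro j _
    apply Continuous.mul continuous_const
    apply Real.continuous_exp.comp
    by_cases h : j ∈ Jset
    · simp only [hE, dif_pos h]
      exact continuous_apply _
    · by_cases h0 : j = j0
      · simp only [hE, dif_neg h, if_pos h0]
        apply continuous_finset_sum
        intro j' _
        exact Continuous.mul continuous_const (continuous_apply j')
      · simp only [hE, dif_neg h, if_neg h0]
        exact continuous_const
  -- transfer compactness and conclude
  have hZsub : Z ⊆ {x : Fin n → ℝ | ∀ i, 0 < x i} := fun x hx => hx.1
  have hcomp := component_image (Z := Z) (Z' := {u | F u = 0}) (f := P) (g := Pinv)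
      (hPcont.mono hZsub) hPinvcont
      (fun x hx => ((hZchar x).mp hx).2)
      (fun u hu => (hZchar (Pinv u)).mpr
        ⟨fun i => Real.exp_pos _, by rw [hPPinv u]; exact hu⟩)
      (fun x hx => hPinvP x hx.1)
      (fun u _ => hPPinv u)
      hx0
  intro hcompact
  have hCcomp : IsCompact (P '' connectedComponentIn Z x0) :=
    hcompact.image_of_continuousOn
      ((hPcont.mono hZsub).mono (connectedComponentIn_subset _ _))
  rw [hcomp] at hCcomp
  have hFPx0 : F (P x0) = 0 := ((hZchar x0).mp hx0).2
  exact graph_noncompact j1' (by rw [hcardJ]; exact hn2) F G (c j1) (hc j1) hGcont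
    hFsplit hGind (P x0) hFPx0 hCcomp
end

/-- A family of N points of ℝ^n is a degenerate circuit: there is a point
(index j0) and a proper subfamily S containing j0 such that the family with j0
removed is affinely independent and the subfamily on S is a circuit. -/
def IsDegenerateCircuitFam {N n : ℕ} (v : Fin N → (Fin n → ℝ)) : Prop :=
  ∃ (j0 : Fin N) (S : Finset (Fin N)), j0 ∈ S ∧ S ≠ Finset.univ ∧
    (∀ γ : Fin N → ℝ, γ j0 = 0 →
      ∑ j, γ j • v j = 0 → ∑ j, γ j = 0 → γ = 0) ∧
    (∃ γ : Fin N → ℝ, γ ≠ 0 ∧ (∀ j ∉ S, γ j = 0) ∧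
      ∑ j, γ j • v j = 0 ∧ ∑ j, γ j = 0) ∧
    (∀ T : Finset (Fin N), T ⊂ S →
      ∀ γ : Fin N → ℝ, (∀ j ∉ T, γ j = 0) →
        ∑ j, γ j • v j = 0 → ∑ j, γ j = 0 → γ = 0)

/-- If the support of an n-variate (n+2)-nomial is a degenerate
circuit, then every point of the positive zero set is a regular point of f
(so Z_+(f) is a smooth embedded (n−1)-manifold), and every connected component
of the positive zero set is non-compact. -/
theorem degenerate_circuit_zero_set_smooth_noncompact
    (n : ℕ) (hn : 1 ≤ n)
    (a : Fin (n + 2) → Fin n → ℤ) (hinj : Function.Injective a)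
    (hdeg : IsDegenerateCircuitFam (fun j => fun i => (a j i : ℝ)))
    (c : Fin (n + 2) → ℝ) (hc : ∀ j, c j ≠ 0) :
    ∀ Z : Set (Fin n → ℝ),
      Z = {x | (∀ i, 0 < x i) ∧ ∑ j, c j * ∏ i, (x i) ^ (a j i) = 0} →
      (∀ x ∈ Z, ∃ (i : Fin n) (d : ℝ), d ≠ 0 ∧
        HasDerivAt
          (fun t : ℝ => ∑ j, c j * ∏ i', (Function.update x i t i') ^ (a j i'))
          d (x i)) ∧
      (∀ x ∈ Z, ¬ IsCompact (connectedComponentIn Z x)) := by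
  intro Z hZ
  subst hZ
  obtain ⟨j0, S, hj0S, hSne, hindep, ⟨γ, hγ0, hγsupp, hγdep, hγsum⟩, -⟩ := hdeg
  have hγj0 : γ j0 ≠ 0 := fun h => hγ0 (hindep γ h hγdep hγsum)
  obtain ⟨j1, hj1S⟩ : ∃ j1, j1 ∉ S := by
    by_contra h
    push_neg at h
    exact hSne (Finset.eq_univ_iff_forall.mpr h)
  have hγj1 : γ j1 = 0 := hγsupp j1 hj1S
  have hj1j0 : j1 ≠ j0 := fun h => hj1S (h ▸ hj0S)
  obtain ⟨j2, hj2⟩ : ∃ j2 : Fin (n+2), j2 ∉ ({j0, j1} : Finset (Fin (n+2))) := by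
    by_contra h
    push_neg at h
    have heq : ({j0, j1} : Finset (Fin (n+2))) = Finset.univ := Finset.eq_univ_iff_forall.mpr h
    have hcard := congrArg Finset.card heq
    rw [Finset.card_univ, Fintype.card_fin] at hcard
    have h2 : ({j0, j1} : Finset (Fin (n+2))).card ≤ 2 := by
      apply le_trans (Finset.card_insert_le j0 {j1})
      simp
    omega
  rw [Finset.mem_insert, Finset.mem_singleton] at hj2
  push_neg at hj2
  constructor
  · rintro x ⟨hxpos, hxzero⟩
    exact regular_point a c hc j0 j1 γ hindep hγj0 hγj1 hγdep hγsum x hxpos hxzero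
  · intro x hx
    have hn2 : 2 ≤ n := by
      by_contra hlt
      have hn1 : n = 1 := by omega
      subst hn1
      have hγa : ∀ i, ∑ j, γ j * (a j i : ℝ) = 0 := by
        intro i
        have := congrFun hγdep i
        simpa [Finset.sum_apply] using this
      have hj0j1 : j0 ≠ j1 := fun h => hj1j0 h.symm
      have hj0j2 : j0 ≠ j2 := fun h => hj2.1 h.symm
      have hj1j2 : j1 ≠ j2 := fun h => hj2.2 h.symm
      have huniv : ({j0, j1, j2} : Finset (Fin 3)) = Finset.univ := by
        apply Finset.eq_univ_of_card
        rw [Finset.card_insert_of_notMem (by simp [hj0j1, hj0j2]),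
          Finset.card_insert_of_notMem (by simp [hj1j2]), Finset.card_singleton]
        rfl
      have hsum3 : ∀ g : Fin 3 → ℝ, ∑ j, g j = g j0 + g j1 + g j2 := by
        intro g
        rw [← huniv, Finset.sum_insert (by simp [hj0j1, hj0j2]),
          Finset.sum_insert (by simp [hj1j2]), Finset.sum_singleton]
        ring
      have hγj2 : γ j2 = -γ j0 := by
        have := hγsum
        rw [hsum3 γ, hγj1] at this
        linarith
      have haeq : a j0 = a j2 := by
        funext i
        have h1 := hγa i
        rw [hsum3 (fun j => γ j * (a j i : ℝ))] at h1
        simp only [hγj1, hγj2, zero_mul] at h1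
        have h2 : γ j0 * ((a j0 i : ℝ) - (a j2 i : ℝ)) = 0 := by linarith
        rcases mul_eq_zero.mp h2 with h | h
        · exact absurd h hγj0
        · have : (a j0 i : ℝ) = (a j2 i : ℝ) := by linarith
          exact_mod_cast this
      exact hj2.1 (hinj haeq).symm
    exact part2 hn2 a c hc j0 j1 j2 hj1j0 hj2.1 hj2.2 γ hindep hγj0 hγj1 hγdep hγsum x hx
end
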